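/- arXiv:math/0307269 — 3 statements merged into one kernel-verified Lean document; each statement's English description precedes it below -/
import Mathlib

section
/- Let W be a thin irreducible T-module with endpoint 1 and local eigenvalue η, and assume η ≠ −1. Let v be a nonzero vector in E_1*W, set η̃ = −1 − b_1/(1+η), and let E be a nonzero element of M with (A − η̃I)E ∈ ℂA_D. Then Ev ∈ E_D*V. -/
open Matrix Polynomial BigOperators

noncomputable section

variable {X : Type*} [Fintype X] [DecidableEq X]

/-- The `i`-th distance matrix of the graph `G` (indexed by `ℤ`; by convention it is
the zero matrix for `i < 0` and also for `i` larger than the diameter). -/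
def distMat (G : SimpleGraph X) (i : ℤ) : Matrix X X ℂ :=
  Matrix.of fun y z => if (G.dist y z : ℤ) = i then (1 : ℂ) else 0

/-- The all-ones matrix `J`. -/
def allOnes (X : Type*) : Matrix X X ℂ := Matrix.of fun _ _ => (1 : ℂ)

/-- The `i`-th dual idempotent `Eᵢ*` with respect to the base point `x`
(indexed by `ℤ`; zero for `i < 0` and for `i` larger than the diameter). -/
def dualIdem (G : SimpleGraph X) (x : X) (i : ℤ) : Matrix X X ℂ :=
  Matrix.of fun y z => if y = z ∧ (G.dist x y : ℤ) = i then (1 : ℂ) else 0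

/-- The characteristic vector `sᵢ` of the `i`-th sphere around `x`. -/
def sphereVec (G : SimpleGraph X) (x : X) (i : ℤ) : X → ℂ :=
  fun y => if (G.dist x y : ℤ) = i then (1 : ℂ) else 0

/-- `G` is distance-regular with diameter `D` and intersection numbers `p h i j`:
`G` is connected with diameter `D`, and for all `h,i,j ≤ D` and all vertices `y,z`
at distance `h`, the number of vertices `w` with `dist y w = i` and `dist w z = j`
equals `p h i j`. -/
def IsDRG (G : SimpleGraph X) (D : ℕ) (p : ℕ → ℕ → ℕ → ℕ) : Prop :=
  G.Connected ∧ (∀ y z : X, G.dist y z ≤ D) ∧ (∃ y z : X, G.dist y z = D) ∧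
    ∀ h i j : ℕ, h ≤ D → i ≤ D → j ≤ D → ∀ y z : X, G.dist y z = h →
      (Finset.univ.filter fun w => G.dist y w = i ∧ G.dist w z = j).card = p h i j

/-- The Bose–Mesner algebra `M`, the subalgebra of `Mat_X(ℂ)` generated by the
adjacency matrix. -/
def bmAlg (G : SimpleGraph X) : Subalgebra ℂ (Matrix X X ℂ) :=
  Algebra.adjoin ℂ {distMat G 1}

/-- The Terwilliger algebra `T`, generated by `A, E₀*, …, E_D*`. -/
def twAlg (G : SimpleGraph X) (x : X) (D : ℕ) : Subalgebra ℂ (Matrix X X ℂ) :=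
  Algebra.adjoin ℂ ({distMat G 1} ∪ {B | ∃ i : ℕ, i ≤ D ∧ B = dualIdem G x (i : ℤ)})

/-- `W` is a `T`-module. -/
def IsTMod (G : SimpleGraph X) (x : X) (D : ℕ) (W : Submodule ℂ (X → ℂ)) : Prop :=
  ∀ B ∈ twAlg G x D, ∀ w ∈ W, B.mulVec w ∈ W

/-- `W` is an irreducible `T`-module. -/
def IsIrredTMod (G : SimpleGraph X) (x : X) (D : ℕ) (W : Submodule ℂ (X → ℂ)) : Prop :=
  IsTMod G x D W ∧ W ≠ ⊥ ∧
    ∀ U : Submodule ℂ (X → ℂ), U ≤ W → IsTMod G x D U → U = ⊥ ∨ U = W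

/-- `W` is thin: `dim Eᵢ* W ≤ 1` for `0 ≤ i ≤ D`. -/
def IsThin (G : SimpleGraph X) (x : X) (D : ℕ) (W : Submodule ℂ (X → ℂ)) : Prop :=
  ∀ i : ℕ, i ≤ D → Module.finrank ℂ (W.map (dualIdem G x (i : ℤ)).mulVecLin) ≤ 1

/-- `W` has endpoint `1`, i.e. `E₀* W = 0` and `E₁* W ≠ 0`. -/
def HasEndpointOne (G : SimpleGraph X) (x : X) (W : Submodule ℂ (X → ℂ)) : Prop :=
  W.map (dualIdem G x 0).mulVecLin = ⊥ ∧ W.map (dualIdem G x 1).mulVecLin ≠ ⊥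

/-- The linear map `P ↦ P v` on matrices. -/
def actOn (v : X → ℂ) : Matrix X X ℂ →ₗ[ℂ] (X → ℂ) where
  toFun P := P.mulVec v
  map_add' P Q := Matrix.add_mulVec P Q v
  map_smul' c P := by simp [Matrix.smul_mulVec]

/-- The subspace `(M; v) = {P ∈ M : P v ∈ E_D* V}`. -/
def MsubV (G : SimpleGraph X) (x : X) (D : ℕ) (v : X → ℂ) : Submodule ℂ (Matrix X X ℂ) :=
  (bmAlg G).toSubmodule ⊓
    Submodule.comap (actOn v) (LinearMap.range (dualIdem G x (D : ℤ)).mulVecLin)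

/-- The space `M(θ) = {Y ∈ M : (A - θI) Y ∈ ℂ A_D}` for `θ ∈ ℂ`. -/
def pseudoSpace (G : SimpleGraph X) (D : ℕ) (θ : ℂ) : Submodule ℂ (Matrix X X ℂ) :=
  (bmAlg G).toSubmodule ⊓
    Submodule.comap (LinearMap.mulLeft ℂ (distMat G 1 - θ • 1))
      (Submodule.span ℂ {distMat G (D : ℤ)})

set_option linter.unusedSectionVars false
set_option maxHeartbeats 1000000

lemma exists_adj_closer {G : SimpleGraph X} (hconn : G.Connected) {u t : X}
    (h : G.dist u t ≠ 0) : ∃ s : X, G.Adj t s ∧ G.dist u s + 1 = G.dist u t := by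
  obtain ⟨p, hp⟩ := (hconn.preconnected t u).exists_walk_length_eq_dist
  cases p with
  | nil =>
      exfalso
      apply h
      rw [SimpleGraph.dist_comm, ← hp]
      rfl
  | @cons _ s _ hadj q =>
      refine ⟨s, hadj, ?_⟩
      have h1 : G.dist s u ≤ q.length := SimpleGraph.dist_le q
      have h2 : G.dist t u ≤ G.dist t s + G.dist s u := hconn.dist_triangle
      have h3 : G.dist t s = 1 := SimpleGraph.dist_eq_one_iff_adj.mpr hadj
      have h4 : q.length + 1 = G.dist t u := by
        simpa [SimpleGraph.Walk.length_cons] using hp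
      have h5 : G.dist u s = G.dist s u := SimpleGraph.dist_comm
      have h6 : G.dist u t = G.dist t u := SimpleGraph.dist_comm
      omega

lemma exists_of_dist {G : SimpleGraph X} (hconn : G.Connected) (u : X) :
    ∀ n : ℕ, ∀ t : X, G.dist u t = n → ∀ m : ℕ, m ≤ n → ∃ s : X, G.dist u s = m := by
  intro n
  induction n with
  | zero => exact fun t ht m hm => ⟨t, by omega⟩
  | succ k ih =>
      intro t ht m hm
      rcases Nat.eq_or_lt_of_le hm with rfl | hlt
      · exact ⟨t, ht⟩
      · obtain ⟨s, _, hs1⟩ := exists_adj_closer hconn (u := u) (t := t) (by omega)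
        exact ih s (by omega) m (by omega)

lemma exists_smul_of_finrank_le_one {S : Submodule ℂ (X → ℂ)} (hS : Module.finrank ℂ S ≤ 1)
    {a b : X → ℂ} (ha : a ∈ S) (hb : b ∈ S) (ha0 : a ≠ 0) : ∃ t : ℂ, b = t • a := by
  obtain ⟨g, hg⟩ := finrank_le_one_iff.mp hS
  obtain ⟨ca, hca⟩ := hg ⟨a, ha⟩
  obtain ⟨cb, hcb⟩ := hg ⟨b, hb⟩
  have h1 : ca • (g : X → ℂ) = a := congrArg Subtype.val hca
  have h2 : cb • (g : X → ℂ) = b := congrArg Subtype.val hcb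
  have hca0 : ca ≠ 0 := by
    rintro rfl
    apply ha0
    rw [← h1, zero_smul]
  refine ⟨cb / ca, ?_⟩
  rw [← h2, ← h1, smul_smul, div_mul_cancel₀ _ hca0]

lemma sum_split3 (F : Finset X) (g : X → ℕ) (hg : ∀ w ∈ F, g w ≤ 2) (f : ℕ → ℂ) :
    ∑ w ∈ F, f (g w) =
      ((F.filter fun w => g w = 0).card : ℂ) * f 0 +
      ((F.filter fun w => g w = 1).card : ℂ) * f 1 +
      ((F.filter fun w => g w = 2).card : ℂ) * f 2 := by
  have hmaps : ∀ w ∈ F, g w ∈ Finset.range 3 := fun w hw =>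
    Finset.mem_range.mpr (by have := hg w hw; omega)
  have hfib := Finset.sum_fiberwise_of_maps_to (g := g) (f := fun w => f (g w)) hmaps
  rw [← hfib]
  have hconst : ∀ i : ℕ, ∑ w ∈ F.filter (fun w => g w = i), f (g w)
      = ((F.filter fun w => g w = i).card : ℂ) * f i := by
    intro i
    rw [Finset.sum_congr rfl (fun w hw => by rw [(Finset.mem_filter.mp hw).2]),
      Finset.sum_const, nsmul_eq_mul]
  rw [Finset.sum_range_succ, Finset.sum_range_succ, Finset.sum_range_succ,
    Finset.sum_range_zero, hconst 0, hconst 1, hconst 2]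
  ring

lemma dualIdem_mulVec (G : SimpleGraph X) (x : X) (i : ℤ) (u : X → ℂ) (y : X) :
    (dualIdem G x i).mulVec u y = if (G.dist x y : ℤ) = i then u y else 0 := by
  classical
  simp only [Matrix.mulVec, dotProduct, dualIdem, Matrix.of_apply]
  by_cases hc : (G.dist x y : ℤ) = i
  · simp [hc]
  · simp [hc]

lemma distMat_mulVec (G : SimpleGraph X) (i : ℤ) (u : X → ℂ) (y : X) :
    (distMat G i).mulVec u y = ∑ z, (if (G.dist y z : ℤ) = i then u z else 0) := by
  simp only [Matrix.mulVec, dotProduct, distMat, Matrix.of_apply, ite_mul, one_mul,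
    zero_mul]

def vanishBelow (G : SimpleGraph X) (x : X) (m : ℕ) : Submodule ℂ (X → ℂ) where
  carrier := {w | ∀ y, G.dist x y < m → w y = 0}
  add_mem' := by
    intro a b ha hb y hy
    simp [Pi.add_apply, ha y hy, hb y hy]
  zero_mem' := by intro y hy; rfl
  smul_mem' := by
    intro c a ha y hy
    simp [Pi.smul_apply, ha y hy]

lemma mem_vanishBelow {G : SimpleGraph X} {x : X} {m : ℕ} {w : X → ℂ} :
    w ∈ vanishBelow G x m ↔ ∀ y, G.dist x y < m → w y = 0 := Iff.rfl

lemma entries_dist_fun {G : SimpleGraph X} {D : ℕ} {p : ℕ → ℕ → ℕ → ℕ}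
    (hconn : G.Connected) (hdle : ∀ y z : X, G.dist y z ≤ D)
    (hp : ∀ h i j : ℕ, h ≤ D → i ≤ D → j ≤ D → ∀ y z : X, G.dist y z = h →
      (Finset.univ.filter fun w => G.dist y w = i ∧ G.dist w z = j).card = p h i j)
    {E : Matrix X X ℂ} (hEM : E ∈ bmAlg G) :
    ∃ l : ℕ → ℂ, ∀ y z : X, E y z = l (G.dist y z) := by
  refine Algebra.adjoin_induction ?hmem ?halg ?hadd ?hmul hEM
  · rintro B rfl
    refine ⟨fun n => if n = 1 then 1 else 0, fun y z => ?_⟩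
    simp only [distMat, Matrix.of_apply]
    by_cases h : G.dist y z = 1
    · simp [h]
    · rw [if_neg h, if_neg (by exact_mod_cast h)]
  · intro r
    refine ⟨fun n => if n = 0 then r else 0, fun y z => ?_⟩
    rw [Matrix.algebraMap_matrix_apply]
    by_cases h : y = z
    · subst h; simp [SimpleGraph.dist_self]
    · rw [if_neg h]
      exact (if_neg (fun h0 => h ((hconn.dist_eq_zero_iff).mp h0))).symm
  · rintro B C _ _ ⟨l, hl⟩ ⟨m, hm⟩
    exact ⟨fun n => l n + m n, fun y z => by simp [Matrix.add_apply, hl y z, hm y z]⟩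
  · rintro B C _ _ ⟨l, hl⟩ ⟨m, hm⟩
    refine ⟨fun h => ∑ i ∈ Finset.range (D+1), ∑ j ∈ Finset.range (D+1),
      ((p h i j : ℂ)) * (l i * m j), fun y z => ?_⟩
    rw [Matrix.mul_apply]
    have hre : ∀ w : X, B y w * C w z = l (G.dist y w) * m (G.dist w z) := fun w => by
      rw [hl y w, hm w z]
    rw [Finset.sum_congr rfl (fun w _ => hre w)]
    have hmaps : ∀ w ∈ (Finset.univ : Finset X), G.dist y w ∈ Finset.range (D+1) :=
      fun w _ => Finset.mem_range.mpr (by have := hdle y w; omega)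
    rw [← Finset.sum_fiberwise_of_maps_to (g := fun w => G.dist y w) hmaps]
    refine Finset.sum_congr rfl ?_
    intro i hi
    have hmaps2 : ∀ w ∈ Finset.univ.filter (fun w => G.dist y w = i),
        G.dist w z ∈ Finset.range (D+1) :=
      fun w _ => Finset.mem_range.mpr (by have := hdle w z; omega)
    rw [← Finset.sum_fiberwise_of_maps_to (g := fun w => G.dist w z) hmaps2]
    refine Finset.sum_congr rfl ?_
    intro j hj
    have hcon : ∀ w ∈ (Finset.univ.filter (fun w => G.dist y w = i)).filter
        (fun w => G.dist w z = j), l (G.dist y w) * m (G.dist w z) = l i * m j := by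
      intro w hw
      simp only [Finset.mem_filter] at hw
      rw [hw.1.2, hw.2]
    rw [Finset.sum_congr rfl hcon, Finset.sum_const, nsmul_eq_mul]
    congr 1
    rw [Finset.filter_filter]
    exact_mod_cast hp (G.dist y z) i j (hdle y z) (by have := Finset.mem_range.mp hi; omega)
      (by have := Finset.mem_range.mp hj; omega) y z rfl

/-- Let `W` be a thin irreducible `T`-module with endpoint 1 and local
eigenvalue `η ≠ -1`.  Let `v` be a nonzero vector in `E₁* W`, set
`η̃ = -1 - b₁/(1+η)`, and let `E` be a nonzero element of `M` with
`(A - η̃ I) E ∈ ℂ A_D`.  Then `E v ∈ E_D* V`. -/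
theorem stmt15 (G : SimpleGraph X) (D : ℕ) (p : ℕ → ℕ → ℕ → ℕ)
    (hdrg : IsDRG G D p) (hD : 3 ≤ D) (x : X)
    (W : Submodule ℂ (X → ℂ))
    (hirr : IsIrredTMod G x D W) (hthin : IsThin G x D W)
    (hend : HasEndpointOne G x W)
    (η : ℂ)
    (hloc : ∀ w ∈ W.map (dualIdem G x 1).mulVecLin,
      (dualIdem G x 1 * distMat G 1 * dualIdem G x 1).mulVec w = η • w)
    (hη : η ≠ -1)
    (v : X → ℂ) (hv : v ≠ 0) (hvW : v ∈ W.map (dualIdem G x 1).mulVecLin)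
    (E : Matrix X X ℂ) (hE0 : E ≠ 0) (hEM : E ∈ bmAlg G)
    (hEc : ∃ c : ℂ, (distMat G 1 - (-1 - (p 1 1 2 : ℂ) / (1 + η)) • 1) * E
      = c • distMat G (D : ℤ)) :
    E.mulVec v ∈ LinearMap.range (dualIdem G x (D : ℤ)).mulVecLin := by
  classical
  obtain ⟨hconn, hdle, hdiam, hp⟩ := hdrg
  obtain ⟨c, hc⟩ := hEc
  set et : ℂ := -1 - (p 1 1 2 : ℂ) / (1 + η) with het_def
  -- basic facts
  have hdist0 : ∀ y z : X, G.dist y z = 0 ↔ y = z := fun y z => hconn.dist_eq_zero_iff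
  have hTW : IsTMod G x D W := hirr.1
  have hAmem : distMat G 1 ∈ twAlg G x D :=
    Algebra.subset_adjoin (Set.mem_union_left _ rfl)
  have hEi : ∀ i : ℕ, i ≤ D → dualIdem G x (i : ℤ) ∈ twAlg G x D := fun i hi =>
    Algebra.subset_adjoin (Set.mem_union_right _ ⟨i, hi, rfl⟩)
  have hbmtw : bmAlg G ≤ twAlg G x D := Algebra.adjoin_mono Set.subset_union_left
  -- v ∈ W and its support
  obtain ⟨v', hv'W, hv'⟩ := hvW
  rw [Matrix.mulVecLin_apply] at hv'
  have hvWmem : v ∈ W := by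
    rw [← hv']; exact hTW _ (hEi 1 (by omega)) v' hv'W
  have hsupp : ∀ z : X, G.dist x z ≠ 1 → v z = 0 := by
    intro z hz
    rw [← hv', dualIdem_mulVec, if_neg (by exact_mod_cast hz)]
  -- entries of E
  obtain ⟨l, hl⟩ := entries_dist_fun hconn hdle hp hEM
  -- sum of entries of v is zero
  have hAv : (distMat G 1).mulVec v ∈ W := hTW _ hAmem v hvWmem
  have hsum0 : ∑ z, v z = 0 := by
    have h0 : (dualIdem G x 0).mulVec ((distMat G 1).mulVec v) = 0 := by
      have hmem : (dualIdem G x 0).mulVecLin ((distMat G 1).mulVec v)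
          ∈ W.map (dualIdem G x ((0:ℕ) : ℤ)).mulVecLin :=
        Submodule.mem_map_of_mem hAv
      rw [Nat.cast_zero, hend.1, Submodule.mem_bot] at hmem
      rw [← Matrix.mulVecLin_apply]; exact hmem
    have h1 := congrFun h0 x
    rw [dualIdem_mulVec, if_pos (by simp [SimpleGraph.dist_self]), distMat_mulVec, Pi.zero_apply] at h1
    rw [← h1]
    refine Finset.sum_congr rfl ?_
    intro z _
    by_cases hz : G.dist x z = 1
    · rw [if_pos (by exact_mod_cast hz)]
    · rw [if_neg (by exact_mod_cast hz), hsupp z hz]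
  -- local eigenvalue equation, pointwise
  have hloceq : ∀ y : X, G.dist x y = 1 →
      ∑ z, (if G.dist y z = 1 then v z else 0) = η * v y := by
    intro y hy
    have h0 := hloc v ⟨v', hv'W, by rw [Matrix.mulVecLin_apply]; exact hv'⟩
    have hE1v : (dualIdem G x 1).mulVec v = v := by
      funext z
      rw [dualIdem_mulVec]
      by_cases hz : G.dist x z = 1
      · rw [if_pos (by exact_mod_cast hz)]
      · rw [if_neg (by exact_mod_cast hz), hsupp z hz]
    rw [← Matrix.mulVec_mulVec, ← Matrix.mulVec_mulVec, hE1v] at h0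
    have h2 := congrFun h0 y
    rw [dualIdem_mulVec, if_pos (by exact_mod_cast hy), distMat_mulVec] at h2
    rw [Pi.smul_apply, smul_eq_mul] at h2
    rw [← h2]
    refine Finset.sum_congr rfl ?_
    intro z _
    by_cases hz : G.dist y z = 1
    · rw [if_pos hz, if_pos (by exact_mod_cast hz)]
    · rw [if_neg hz, if_neg (by exact_mod_cast hz)]
  -- entry-wise consequence of hc
  have hce : ∀ y' z' : X, (∑ w, (if G.dist y' w = 1 then l (G.dist w z') else 0))
      - et * l (G.dist y' z') = c * (if (G.dist y' z' : ℤ) = (D : ℤ) then 1 else 0) := by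
    intro y' z'
    have h0 := congrFun (congrFun hc y') z'
    rw [Matrix.sub_mul, Matrix.smul_mul, Matrix.one_mul] at h0
    rw [Matrix.sub_apply, Matrix.smul_apply, Matrix.smul_apply, smul_eq_mul, smul_eq_mul] at h0
    rw [Matrix.mul_apply, hl] at h0
    have hterm : ∀ w : X, distMat G 1 y' w * E w z'
        = (if G.dist y' w = 1 then l (G.dist w z') else 0) := by
      intro w
      rw [hl]
      simp only [distMat, Matrix.of_apply]
      by_cases hw : G.dist y' w = 1
      · rw [if_pos hw, if_pos (by exact_mod_cast hw), one_mul]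
      · rw [if_neg hw, if_neg (by exact_mod_cast hw), zero_mul]
    rw [Finset.sum_congr rfl (fun w _ => hterm w)] at h0
    rw [h0]
    simp only [distMat, Matrix.of_apply]
  -- choose an adjacent pair (y₁, a0) with a neighbour of y₁ at distance 2 from a0
  obtain ⟨ad, bd, habd⟩ := hdiam
  obtain ⟨s2, hs2⟩ := exists_of_dist hconn ad D bd habd 2 (by omega)
  obtain ⟨y₁, hy₁adj, hy₁d⟩ := exists_adj_closer hconn (u := ad) (t := s2) (by omega)
  have hy₁ : G.dist ad y₁ = 1 := by omega
  have hyz : G.dist y₁ ad = 1 := by rw [SimpleGraph.dist_comm]; exact hy₁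
  set F : Finset X := Finset.univ.filter (fun w => G.dist y₁ w = 1) with hF
  have hFle : ∀ w ∈ F, G.dist w ad ≤ 2 := by
    intro w hw
    have h1 : G.dist w ad ≤ G.dist w y₁ + G.dist y₁ ad := hconn.dist_triangle
    have h2 : G.dist w y₁ = 1 := by
      rw [SimpleGraph.dist_comm]; exact (Finset.mem_filter.mp hw).2
    omega
  -- the n-counts
  have hn0 : (F.filter fun w => G.dist w ad = 0) = {ad} := by
    ext w
    simp only [Finset.mem_filter, Finset.mem_singleton, hF, Finset.mem_univ, true_and]
    constructor
    · rintro ⟨-, h2⟩; exact (hdist0 w ad).mp h2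
    · rintro rfl; exact ⟨hyz, SimpleGraph.dist_self⟩
  have hn2 : ((F.filter fun w => G.dist w ad = 2).card) = p 1 1 2 := by
    rw [hF, Finset.filter_filter]
    exact hp 1 1 2 (by omega) (by omega) (by omega) y₁ ad hyz
  have hn2pos : (p 1 1 2 : ℂ) ≠ 0 := by
    rw [← hn2]
    have hmem : s2 ∈ F.filter fun w => G.dist w ad = 2 := by
      simp only [Finset.mem_filter, hF, Finset.mem_univ, true_and]
      constructor
      · rw [SimpleGraph.dist_comm]
        exact SimpleGraph.dist_eq_one_iff_adj.mpr hy₁adj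
      · rw [SimpleGraph.dist_comm]; exact hs2
    have : (F.filter fun w => G.dist w ad = 2).card ≠ 0 :=
      Finset.card_ne_zero_of_mem hmem
    exact_mod_cast this
  -- equation at (y₁, y₁)
  have e1 : (F.card : ℂ) * l 1 = et * l 0 := by
    have h0 := hce y₁ y₁
    rw [SimpleGraph.dist_self] at h0
    rw [if_neg (by exact_mod_cast (by omega : ¬ (0:ℕ) = D)), mul_zero, sub_eq_zero] at h0
    rw [← h0]
    have : ∀ w : X, (if G.dist y₁ w = 1 then l (G.dist w y₁) else 0)
        = (if G.dist y₁ w = 1 then l 1 else 0) := by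
      intro w
      by_cases hw : G.dist y₁ w = 1
      · rw [if_pos hw, if_pos hw, SimpleGraph.dist_comm, hw]
      · rw [if_neg hw, if_neg hw]
    rw [Finset.sum_congr rfl (fun w _ => this w), ← Finset.sum_filter]
    rw [Finset.sum_const, nsmul_eq_mul]
  -- equation at (y₁, ad)
  have e2 : l 0 + ((F.filter fun w => G.dist w ad = 1).card : ℂ) * l 1
      + (p 1 1 2 : ℂ) * l 2 = et * l 1 := by
    have h0 := hce y₁ ad
    rw [hyz] at h0
    rw [if_neg (by exact_mod_cast (by omega : ¬ (1:ℕ) = D)), mul_zero, sub_eq_zero] at h0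
    rw [← Finset.sum_filter] at h0
    rw [← hF] at h0
    have h1 := sum_split3 F (fun w => G.dist w ad) hFle l
    rw [h1, hn0] at h0
    rw [← h0, hn2]
    simp only [Finset.card_singleton, Nat.cast_one, one_mul]
  -- the cardinality partition
  have ek : (F.card : ℂ) = 1 + ((F.filter fun w => G.dist w ad = 1).card : ℂ)
      + (p 1 1 2 : ℂ) := by
    have h1 := sum_split3 F (fun w => G.dist w ad) hFle (fun _ => (1:ℂ))
    rw [hn0] at h1
    simp only [Finset.sum_const, nsmul_eq_mul, mul_one, Finset.card_singleton,
      Nat.cast_one] at h1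
    rw [h1, hn2]
  -- the scalar identity
  have hs : (1 : ℂ) + η ≠ 0 := by
    intro h
    apply hη
    linear_combination h
  have het2 : et * (1 + η) = -(1 + η) - (p 1 1 2 : ℂ) := by
    rw [het_def]
    field_simp
  have key1 : l 0 + η * l 1 - (1 + η) * l 2 = 0 := by
    have hmul : (p 1 1 2 : ℂ) * (l 0 + η * l 1 - (1 + η) * l 2) = 0 := by
      linear_combination (1+η) * e1 - (1+η) * e2 + (l 0 - l 1) * het2
        - (1+η) * (l 1) * ek
    rcases mul_eq_zero.mp hmul with h | h
    · exact absurd h hn2pos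
    · exact h
  -- E v vanishes on the sphere of radius 1
  set Ev : X → ℂ := E.mulVec v with hEv_def
  have p1zero : ∀ y : X, G.dist x y = 1 → Ev y = 0 := by
    intro y hy
    have hEvy : Ev y = ∑ z, l (G.dist y z) * v z := by
      rw [hEv_def]
      show ∑ z, E y z * v z = _
      exact Finset.sum_congr rfl (fun z _ => by rw [hl])
    have hptw : ∀ z : X, l (G.dist y z) * v z
        = (l 0 - l 2) * (if y = z then v z else 0)
          + (l 1 - l 2) * (if G.dist y z = 1 then v z else 0)
          + l 2 * v z := by
      intro z
      by_cases hz : G.dist x z = 1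
      · by_cases hyz' : y = z
        · have hd0 : G.dist y z = 0 := by rw [hyz']; exact SimpleGraph.dist_self
          rw [hd0, if_pos hyz', if_neg (by omega : ¬ (0:ℕ) = 1)]
          ring
        · by_cases h1 : G.dist y z = 1
          · rw [h1, if_neg hyz', if_pos rfl]
            ring
          · have h2 : G.dist y z = 2 := by
              have hle : G.dist y z ≤ G.dist y x + G.dist x z := hconn.dist_triangle
              have hyx : G.dist y x = 1 := by rw [SimpleGraph.dist_comm]; exact hy
              have hne0 : G.dist y z ≠ 0 := fun h => hyz' ((hdist0 y z).mp h)
              omega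
            rw [if_neg hyz', if_neg h1, h2]
            ring
      · rw [hsupp z hz]
        by_cases hyz' : y = z <;> by_cases h1 : G.dist y z = 1 <;>
          simp [hyz', h1]
    rw [Finset.sum_congr rfl (fun z _ => hptw z)] at hEvy
    rw [Finset.sum_add_distrib, Finset.sum_add_distrib, ← Finset.mul_sum, ← Finset.mul_sum,
      ← Finset.mul_sum] at hEvy
    rw [Finset.sum_ite_eq Finset.univ y v, if_pos (Finset.mem_univ y)] at hEvy
    rw [hloceq y hy, hsum0, mul_zero, add_zero] at hEvy
    rw [hEvy]
    linear_combination (v y) * key1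
  -- E v lies in W
  have hET : E ∈ twAlg G x D := hbmtw hEM
  have hEvW : Ev ∈ W := hTW E hET v hvWmem
  have hEvx : Ev x = 0 := by
    have hmem : (dualIdem G x ((0:ℕ) : ℤ)).mulVecLin Ev
        ∈ W.map (dualIdem G x ((0:ℕ) : ℤ)).mulVecLin :=
      Submodule.mem_map_of_mem hEvW
    rw [Nat.cast_zero, hend.1, Submodule.mem_bot] at hmem
    have h1 := congrFun hmem x
    rw [Matrix.mulVecLin_apply, dualIdem_mulVec,
      if_pos (by simp [SimpleGraph.dist_self]), Pi.zero_apply] at h1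
    exact h1
  suffices hQ : ∀ y : X, G.dist x y ≠ D → Ev y = 0 by
    refine ⟨Ev, ?_⟩
    rw [Matrix.mulVecLin_apply]
    funext y
    rw [dualIdem_mulVec]
    by_cases hy : G.dist x y = D
    · rw [if_pos (by exact_mod_cast hy)]
    · rw [if_neg (by exact_mod_cast hy), hQ y hy]
  by_contra hq
  push_neg at hq
  obtain ⟨y₀, hy₀D, hy₀⟩ := hq
  have hPex : ∃ n : ℕ, ∃ y : X, G.dist x y = n ∧ Ev y ≠ 0 := ⟨G.dist x y₀, y₀, rfl, hy₀⟩
  set m := Nat.find hPex with hmdef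
  obtain ⟨ym, hymd, hymne⟩ := Nat.find_spec hPex
  have hmin : ∀ y : X, G.dist x y < m → Ev y = 0 := by
    intro y hy
    by_contra h
    exact Nat.find_min hPex hy ⟨y, rfl, h⟩
  have hmle : m + 1 ≤ D := by
    have h1 : m ≤ G.dist x y₀ := Nat.find_min' hPex ⟨y₀, rfl, hy₀⟩
    have h2 := hdle x y₀
    omega
  have hm0 : m ≠ 0 := by
    intro h
    apply hymne
    have hxy : x = ym := (hdist0 x ym).mp (by omega)
    rw [← hxy]
    exact hEvx
  have hm1 : m ≠ 1 := by
    intro h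
    exact hymne (p1zero ym (by omega))
  have h2m : 2 ≤ m := by omega
  set pm : X → ℂ := fun z => if G.dist x z = m then Ev z else 0 with hpmdef
  have hpmeq : (dualIdem G x (m : ℤ)).mulVec Ev = pm := by
    funext z
    rw [dualIdem_mulVec]
    simp only [hpmdef]
    by_cases hz : G.dist x z = m
    · rw [if_pos (by exact_mod_cast hz), if_pos hz]
    · rw [if_neg (by exact_mod_cast hz), if_neg hz]
  have hpmW : pm ∈ W := by
    rw [← hpmeq]; exact hTW _ (hEi m (by omega)) _ hEvW
  have hpm_map : pm ∈ W.map (dualIdem G x (m : ℤ)).mulVecLin :=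
    ⟨Ev, hEvW, by rw [Matrix.mulVecLin_apply]; exact hpmeq⟩
  have hpmne : pm ≠ 0 := by
    intro h
    apply hymne
    have h1 := congrFun h ym
    simp only [hpmdef, Pi.zero_apply, if_pos hymd] at h1
    rwa [if_pos (hymd.trans hmdef.symm)] at h1
  have hKEY : ∀ y : X, G.dist x y + 1 = m →
      ∑ z, (if G.dist y z = 1 then pm z else 0) = 0 := by
    intro y hym1
    have hvec := congrFun (congrArg (fun M => M.mulVec v) hc) y
    rw [← Matrix.mulVec_mulVec, Matrix.sub_mulVec, Matrix.smul_mulVec,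
      Matrix.one_mulVec, Matrix.smul_mulVec] at hvec
    simp only [Pi.sub_apply, Pi.smul_apply, smul_eq_mul] at hvec
    rw [← hEv_def] at hvec
    rw [hmin y (by omega), mul_zero, sub_zero] at hvec
    rw [distMat_mulVec G 1, distMat_mulVec G (D : ℤ)] at hvec
    have hAD : ∑ z, (if (G.dist y z : ℤ) = (D : ℤ) then v z else 0) = 0 := by
      refine Finset.sum_eq_zero ?_
      intro z _
      by_cases hz : G.dist x z = 1
      · have h1 : G.dist y z ≤ G.dist y x + G.dist x z := hconn.dist_triangle
        have h2 : G.dist y x = G.dist x y := SimpleGraph.dist_comm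
        rw [if_neg (by exact_mod_cast (by omega : ¬ G.dist y z = D))]
      · rw [hsupp z hz, ite_self]
    rw [hAD, mul_zero] at hvec
    have hcong : ∑ z, (if G.dist y z = 1 then pm z else 0)
        = ∑ z, (if (G.dist y z : ℤ) = (1 : ℤ) then Ev z else 0) := by
      refine Finset.sum_congr rfl ?_
      intro z _
      by_cases h1 : G.dist y z = 1
      · rw [if_pos h1, if_pos (by exact_mod_cast h1)]
        by_cases hz : G.dist x z = m
        · simp only [hpmdef, if_pos hz]
        · have hlt : G.dist x z < m := by
            have h2 : G.dist x z ≤ G.dist x y + G.dist y z := hconn.dist_triangle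
            omega
          simp only [hpmdef, if_neg hz]
          rw [hmin z hlt]
      · rw [if_neg h1, if_neg (by exact_mod_cast h1)]
    rw [hcong, hvec]
  have hth := hthin m (by omega)
  set U : Submodule ℂ (X → ℂ) := W ⊓ vanishBelow G x m with hUdef
  have hUT : IsTMod G x D U := by
    intro B hB
    refine Algebra.adjoin_induction
      (p := fun B _ => ∀ w ∈ U, B.mulVec w ∈ U) ?_ ?_ ?_ ?_ hB
    · rintro B hBmem
      rcases hBmem with hB1 | ⟨i, hi, rfl⟩
      · have hBeq : B = distMat G 1 := hB1
        subst hBeq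
        intro w hw
        obtain ⟨hwW, hwv⟩ := Submodule.mem_inf.mp hw
        refine Submodule.mem_inf.mpr ⟨hTW _ hAmem w hwW, ?_⟩
        rw [mem_vanishBelow]
        intro y hy
        rw [distMat_mulVec]
        by_cases hcase : G.dist x y + 1 = m
        · set wm : X → ℂ := fun z => if G.dist x z = m then w z else 0 with hwmdef
          have hwmeq : (dualIdem G x (m : ℤ)).mulVec w = wm := by
            funext z
            rw [dualIdem_mulVec]
            simp only [hwmdef]
            by_cases hz : G.dist x z = m
            · rw [if_pos (by exact_mod_cast hz), if_pos hz]
            · rw [if_neg (by exact_mod_cast hz), if_neg hz]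
          have hwm_map : wm ∈ W.map (dualIdem G x (m : ℤ)).mulVecLin :=
            ⟨w, hwW, by rw [Matrix.mulVecLin_apply]; exact hwmeq⟩
          obtain ⟨t, ht⟩ := exists_smul_of_finrank_le_one hth hpm_map hwm_map hpmne
          have hcong : ∑ z, (if (G.dist y z : ℤ) = (1 : ℤ) then w z else 0)
              = ∑ z, (if G.dist y z = 1 then t * pm z else 0) := by
            refine Finset.sum_congr rfl ?_
            intro z _
            by_cases h1 : G.dist y z = 1
            · rw [if_pos (by exact_mod_cast h1), if_pos h1]
              have hwz : w z = wm z := by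
                simp only [hwmdef]
                by_cases hz : G.dist x z = m
                · rw [if_pos hz]
                · have hlt : G.dist x z < m := by
                    have h2 : G.dist x z ≤ G.dist x y + G.dist y z := hconn.dist_triangle
                    omega
                  rw [if_neg hz, hwv z hlt]
              rw [hwz, ht, Pi.smul_apply, smul_eq_mul]
            · rw [if_neg (by exact_mod_cast h1), if_neg h1]
          rw [hcong]
          have hfac : ∑ z, (if G.dist y z = 1 then t * pm z else 0)
              = t * ∑ z, (if G.dist y z = 1 then pm z else 0) := by
            rw [Finset.mul_sum]
            refine Finset.sum_congr rfl ?_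
            intro z _
            by_cases h1 : G.dist y z = 1 <;> simp [h1]
          rw [hfac, hKEY y hcase, mul_zero]
        · refine Finset.sum_eq_zero ?_
          intro z _
          by_cases h1 : G.dist y z = 1
          · rw [if_pos (by exact_mod_cast h1)]
            refine hwv z ?_
            have h2 : G.dist x z ≤ G.dist x y + G.dist y z := hconn.dist_triangle
            omega
          · rw [if_neg (by exact_mod_cast h1)]
      · intro w hw
        obtain ⟨hwW, hwv⟩ := Submodule.mem_inf.mp hw
        refine Submodule.mem_inf.mpr ⟨hTW _ (hEi i hi) w hwW, ?_⟩
        rw [mem_vanishBelow]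
        intro y hy
        rw [dualIdem_mulVec]
        by_cases hz : (G.dist x y : ℤ) = (i : ℤ)
        · rw [if_pos hz]; exact hwv y hy
        · rw [if_neg hz]
    · intro r w hw
      have halg : (algebraMap ℂ (Matrix X X ℂ) r).mulVec w = r • w := by
        rw [Algebra.algebraMap_eq_smul_one, Matrix.smul_mulVec, Matrix.one_mulVec]
      rw [halg]
      exact Submodule.smul_mem U r hw
    · intro B Cmat hB1 hC1 ihB ihC w hw
      rw [Matrix.add_mulVec]
      exact Submodule.add_mem U (ihB w hw) (ihC w hw)
    · intro B Cmat hB1 hC1 ihB ihC w hw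
      rw [← Matrix.mulVec_mulVec]
      exact ihB _ (ihC w hw)
  rcases hirr.2.2 U inf_le_left hUT with hbot | htop
  · apply hpmne
    have hpmU : pm ∈ U := Submodule.mem_inf.mpr ⟨hpmW, by
      rw [mem_vanishBelow]
      intro y hy
      simp only [hpmdef]
      exact if_neg (by omega)⟩
    rw [hbot, Submodule.mem_bot] at hpmU
    exact hpmU
  · obtain ⟨z, hz⟩ := Function.ne_iff.mp hv
    have hdz : G.dist x z = 1 := by
      by_contra h
      exact hz (hsupp z h)
    have hvU : v ∈ U := htop ▸ hvWmem
    exact hz ((Submodule.mem_inf.mp hvU).2 z (by omega))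
end
end

section
/- Let W be a thin irreducible T-module with endpoint 1 and local eigenvalue η = −1, and let v be a nonzero vector in E_1*W. Then E_i*A_{i+1}v = 0 for 1 ≤ i ≤ D−1; in particular A_Dv ∈ E_D*V. -/
open Matrix Polynomial BigOperators

noncomputable section

variable {X : Type*} [Fintype X] [DecidableEq X]

namespace Stmt16Aux
set_option linter.unusedSectionVars false
set_option linter.unnecessarySeqFocus false

variable {X : Type*} [Fintype X] [DecidableEq X]

lemma dualIdem_mulVec_apply (G : SimpleGraph X) (x : X) (s : ℤ) (w : X → ℂ) (y : X) :
    (dualIdem G x s).mulVec w y = if (G.dist x y : ℤ) = s then w y else 0 := by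
  simp only [Matrix.mulVec, dotProduct, dualIdem, Matrix.of_apply]
  rw [Finset.sum_eq_single y]
  · by_cases h : (G.dist x y : ℤ) = s <;> simp [h]
  · intro b _ hb
    simp [(Ne.symm hb : y ≠ b)]
  · intro h; exact absurd (Finset.mem_univ y) h

lemma distMat_mulVec_apply (G : SimpleGraph X) (j : ℤ) (w : X → ℂ) (y : X) :
    (distMat G j).mulVec w y = ∑ z, if (G.dist y z : ℤ) = j then w z else 0 := by
  simp only [Matrix.mulVec, dotProduct, distMat, Matrix.of_apply, ite_mul, one_mul,
    zero_mul]

lemma EA_vanish (G : SimpleGraph X) (x : X) (s j : ℤ) (v : X → ℂ)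
    (h : ∀ y z, (G.dist x y : ℤ) = s → (G.dist y z : ℤ) = j → v z = 0) :
    (dualIdem G x s).mulVec ((distMat G j).mulVec v) = 0 := by
  funext y
  rw [Pi.zero_apply, dualIdem_mulVec_apply]
  split_ifs with h1
  · rw [distMat_mulVec_apply]
    apply Finset.sum_eq_zero
    intro z _
    split_ifs with h2
    · exact h y z h1 h2
    · rfl
  · rfl

lemma EAE_vanish (G : SimpleGraph X) (x : X) (s r : ℤ) (w : X → ℂ)
    (h : ∀ y z, (G.dist x y : ℤ) = s → (G.dist x z : ℤ) = r → (G.dist y z : ℤ) ≠ 1) :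
    (dualIdem G x s).mulVec ((distMat G 1).mulVec ((dualIdem G x r).mulVec w)) = 0 := by
  funext y
  rw [Pi.zero_apply, dualIdem_mulVec_apply]
  split_ifs with h1
  · rw [distMat_mulVec_apply]
    apply Finset.sum_eq_zero
    intro z _
    rw [dualIdem_mulVec_apply]
    split_ifs with h2 h3
    · exact absurd h2 (h y z h1 h3)
    · rfl
    · rfl
  · rfl

lemma EE_mulVec (G : SimpleGraph X) (x : X) (s r : ℤ) (w : X → ℂ) :
    (dualIdem G x s).mulVec ((dualIdem G x r).mulVec w)
      = if s = r then (dualIdem G x r).mulVec w else 0 := by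
  funext y
  rw [dualIdem_mulVec_apply, dualIdem_mulVec_apply]
  by_cases h1 : (G.dist x y : ℤ) = s <;> by_cases h2 : (G.dist x y : ℤ) = r <;>
    by_cases h3 : s = r <;>
    simp [h1, h2, h3, dualIdem_mulVec_apply] <;> omega

lemma partition_mulVec (G : SimpleGraph X) (x : X) (D : ℕ) (hdiam : ∀ z, G.dist x z ≤ D)
    (w : X → ℂ) :
    ∑ s ∈ Finset.range (D + 1), (dualIdem G x (s : ℤ)).mulVec w = w := by
  funext y
  rw [Finset.sum_apply]
  have h1 : ∀ s ∈ Finset.range (D + 1),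
      (dualIdem G x (s : ℤ)).mulVec w y = if G.dist x y = s then w y else 0 := by
    intro s _
    rw [dualIdem_mulVec_apply]
    congr 1
    simp [Nat.cast_inj]
  rw [Finset.sum_congr rfl h1, Finset.sum_ite_eq]
  simp [Nat.lt_succ_iff, hdiam y]

lemma Jsum_mulVec (G : SimpleGraph X) (D : ℕ) (hdiam : ∀ y z : X, G.dist y z ≤ D)
    (v : X → ℂ) (hsum : ∑ z, v z = 0) :
    ∑ j ∈ Finset.range (D + 1), (distMat G (j : ℤ)).mulVec v = 0 := by
  funext y
  rw [Finset.sum_apply, Pi.zero_apply]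
  have h1 : ∀ j ∈ Finset.range (D + 1),
      (distMat G (j : ℤ)).mulVec v y = ∑ z, if G.dist y z = j then v z else 0 := by
    intro j _
    rw [distMat_mulVec_apply]
    apply Finset.sum_congr rfl
    intro z _
    congr 1
    simp [Nat.cast_inj]
  rw [Finset.sum_congr rfl h1, Finset.sum_comm]
  have h2 : ∀ z ∈ (Finset.univ : Finset X),
      (∑ j ∈ Finset.range (D + 1), if G.dist y z = j then v z else 0) = v z := by
    intro z _
    rw [Finset.sum_ite_eq]
    simp [Nat.lt_succ_iff, hdiam y z]
  rw [Finset.sum_congr rfl h2, hsum]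

lemma distMat_zero (G : SimpleGraph X) (hc : G.Connected) : distMat G 0 = 1 := by
  ext y z
  simp only [distMat, Matrix.of_apply, Matrix.one_apply, Nat.cast_eq_zero,
    hc.dist_eq_zero_iff]

lemma exists_adj_dist (G : SimpleGraph X) (hc : G.Connected) (y z : X) (n : ℕ)
    (h : G.dist y z = n + 1) : ∃ w, G.Adj w z ∧ G.dist y w = n := by
  obtain ⟨P, hP⟩ := hc.exists_walk_length_eq_dist y z
  rw [h] at hP
  have hP' : P.reverse.length = n + 1 := by rwa [SimpleGraph.Walk.length_reverse]
  obtain ⟨w, hzw, q, hq⟩ : ∃ w, ∃ _ : G.Adj z w, ∃ q : G.Walk w y, q.length = n := by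
    cases hQ : P.reverse with
    | nil => rw [hQ] at hP'; simp at hP'
    | cons h' q' =>
      refine ⟨_, h', q', ?_⟩
      rw [hQ] at hP'
      simpa using hP'
  have h1 : G.dist y w ≤ n := by
    have := SimpleGraph.dist_le q.reverse
    rwa [SimpleGraph.Walk.length_reverse, hq] at this
  have h2 : G.dist w z = 1 := by
    rw [SimpleGraph.dist_eq_one_iff_adj]; exact hzw.symm
  have h3 : n + 1 ≤ G.dist y w + 1 := by
    have := hc.dist_triangle (u := y) (v := w) (w := z)
    omega
  exact ⟨w, hzw.symm, by omega⟩

end Stmt16Aux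

namespace Stmt16Aux
set_option linter.unusedSectionVars false

section DRG

variable {X : Type*} [Fintype X] [DecidableEq X]
variable (G : SimpleGraph X) (D : ℕ) (p : ℕ → ℕ → ℕ → ℕ)
variable (hc : G.Connected) (hdiam : ∀ y z : X, G.dist y z ≤ D)
variable (hex : ∃ y z : X, G.dist y z = D)
variable (hax : ∀ h i j : ℕ, h ≤ D → i ≤ D → j ≤ D → ∀ y z : X, G.dist y z = h →
      (Finset.univ.filter fun w => G.dist y w = i ∧ G.dist w z = j).card = p h i j)

include hc hex in
lemma exists_pair_dist : ∀ h ≤ D, ∃ y z : X, G.dist y z = h := by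
  have key : ∀ m, m ≤ D → ∃ y z : X, G.dist y z = D - m := by
    intro m
    induction m with
    | zero => intro _; simpa using hex
    | succ n IH =>
      intro hn
      obtain ⟨y, z, hyz⟩ := IH (by omega)
      have : G.dist y z = (D - (n + 1)) + 1 := by omega
      obtain ⟨w, _, hw⟩ := exists_adj_dist G hc y z _ this
      exact ⟨y, w, hw⟩
  intro h hh
  obtain ⟨y, z, hyz⟩ := key (D - h) (by omega)
  exact ⟨y, z, by omega⟩

include hc hex hax in
lemma p_far_zero (h j : ℕ) (hh : h ≤ D) (hj : j ≤ D) (hfar : h + 2 ≤ j ∨ j + 2 ≤ h) :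
    p h 1 j = 0 := by
  obtain ⟨y, z, hyz⟩ := exists_pair_dist G D hc hex h hh
  rw [← hax h 1 j hh (by omega) hj y z hyz]
  rw [Finset.card_eq_zero, Finset.filter_eq_empty_iff]
  rintro w - ⟨h1, h2⟩
  have t1 := hc.dist_triangle (u := y) (v := w) (w := z)
  have t2 := hc.dist_triangle (u := w) (v := y) (w := z)
  rw [SimpleGraph.dist_comm (u := w) (v := y)] at t2
  omega

include hc hax in
lemma p_zero_one_zero (hD1 : 1 ≤ D) : p 0 1 0 = 0 := by
  obtain ⟨y⟩ := hc.nonempty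
  rw [← hax 0 1 0 (by omega) (by omega) (by omega) y y (SimpleGraph.dist_self)]
  rw [Finset.card_eq_zero, Finset.filter_eq_empty_iff]
  rintro w - ⟨h1, h2⟩
  rw [hc.dist_eq_zero_iff] at h2
  rw [h2] at h1
  simp [SimpleGraph.dist_self] at h1

include hc hex hax in
lemma p_one_one_zero (hD : 1 ≤ D) : p 1 1 0 = 1 := by
  obtain ⟨y, z, hyz⟩ := exists_pair_dist G D hc hex 1 hD
  rw [← hax 1 1 0 hD hD (by omega) y z hyz]
  rw [Finset.card_eq_one]
  refine ⟨z, ?_⟩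
  ext w
  simp only [Finset.mem_filter, Finset.mem_univ, true_and, Finset.mem_singleton]
  constructor
  · rintro ⟨h1, h2⟩
    exact hc.dist_eq_zero_iff.mp h2
  · rintro rfl
    exact ⟨hyz, SimpleGraph.dist_self⟩

include hc hex hax in
lemma p_c_pos (t : ℕ) (ht : t + 1 ≤ D) : 0 < p (t + 1) 1 t := by
  obtain ⟨y, z, hyz⟩ := exists_pair_dist G D hc hex (t + 1) ht
  rw [← hax (t + 1) 1 t ht (by omega) (by omega) y z hyz]
  rw [Finset.card_pos]
  have hzy : G.dist z y = t + 1 := by rwa [SimpleGraph.dist_comm]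
  obtain ⟨w, hadj, hw⟩ := exists_adj_dist G hc z y _ hzy
  refine ⟨w, ?_⟩
  simp only [Finset.mem_filter, Finset.mem_univ, true_and]
  constructor
  · rw [SimpleGraph.dist_eq_one_iff_adj]
    exact hadj.symm
  · rwa [SimpleGraph.dist_comm]

include hc hex hax in
lemma p_val (t : ℕ) (ht1 : 1 ≤ t) (ht : t + 1 ≤ D) :
    p t 1 (t - 1) + p t 1 t + p t 1 (t + 1) = p 0 1 1 := by
  obtain ⟨y, z, hyz⟩ := exists_pair_dist G D hc hex t (by omega)
  have e1 := hax t 1 (t - 1) (by omega) (by omega) (by omega) y z hyz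
  have e2 := hax t 1 t (by omega) (by omega) (by omega) y z hyz
  have e3 := hax t 1 (t + 1) (by omega) (by omega) (by omega) y z hyz
  have e0 := hax 0 1 1 (by omega) (by omega) (by omega) y y (SimpleGraph.dist_self)
  rw [← e0, ← e1, ← e2, ← e3]
  have hF : (Finset.univ.filter fun w => G.dist y w = 1 ∧ G.dist w y = 1)
      = ((Finset.univ.filter fun w => G.dist y w = 1 ∧ G.dist w z = t - 1)
        ∪ Finset.univ.filter fun w => G.dist y w = 1 ∧ G.dist w z = t)
        ∪ Finset.univ.filter fun w => G.dist y w = 1 ∧ G.dist w z = t + 1 := by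
    ext w
    simp only [Finset.mem_filter, Finset.mem_univ, true_and, Finset.mem_union]
    constructor
    · rintro ⟨h1, -⟩
      have t1 := hc.dist_triangle (u := w) (v := y) (w := z)
      have t2 := hc.dist_triangle (u := y) (v := w) (w := z)
      rw [SimpleGraph.dist_comm (u := w) (v := y)] at t1
      have : G.dist w z = t - 1 ∨ G.dist w z = t ∨ G.dist w z = t + 1 := by omega
      rcases this with h | h | h
      · exact Or.inl (Or.inl ⟨h1, h⟩)
      · exact Or.inl (Or.inr ⟨h1, h⟩)
      · exact Or.inr ⟨h1, h⟩
    · rintro ((⟨h1, -⟩ | ⟨h1, -⟩) | ⟨h1, -⟩) <;>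
        exact ⟨h1, by rwa [SimpleGraph.dist_comm]⟩
  rw [hF]
  rw [Finset.card_union_of_disjoint, Finset.card_union_of_disjoint]
  · rw [Finset.disjoint_left]
    rintro w hw1 hw2
    simp only [Finset.mem_filter, Finset.mem_univ, true_and] at hw1 hw2
    omega
  · rw [Finset.disjoint_left]
    rintro w hw1 hw2
    simp only [Finset.mem_union, Finset.mem_filter, Finset.mem_univ, true_and] at hw1 hw2
    rcases hw1 with ⟨-, h⟩ | ⟨-, h⟩ <;> omega

include hdiam hax in
lemma A_mul_distMat (t : ℕ) (ht : t ≤ D) (hD1 : 1 ≤ D) :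
    distMat G 1 * distMat G (t : ℤ)
      = ∑ h ∈ Finset.range (D + 1), (p h 1 t : ℂ) • distMat G (h : ℤ) := by
  ext y z
  rw [Matrix.mul_apply]
  have hL : (∑ w, distMat G 1 y w * distMat G (t : ℤ) w z)
      = ((Finset.univ.filter fun w => G.dist y w = 1 ∧ G.dist w z = t).card : ℂ) := by
    rw [Finset.card_filter]
    push_cast
    apply Finset.sum_congr rfl
    intro w _
    simp only [distMat, Matrix.of_apply]
    by_cases h1 : G.dist y w = 1 <;> by_cases h2 : G.dist w z = t <;>
      simp [h1, h2, Nat.cast_inj]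
  rw [hL, hax (G.dist y z) 1 t (hdiam y z) hD1 ht y z rfl]
  rw [Matrix.sum_apply]
  simp only [Matrix.smul_apply, distMat, Matrix.of_apply, smul_eq_mul, Nat.cast_inj]
  rw [Finset.sum_eq_single (G.dist y z)]
  · simp
  · intro b _ hb
    simp [Ne.symm hb]
  · intro hmem
    simp only [Finset.mem_range, Nat.lt_succ_iff] at hmem
    exact absurd (hdiam y z) hmem

end DRG

end Stmt16Aux
namespace Stmt16Aux
set_option linter.unusedSectionVars false

section Rec

variable {X : Type*} [Fintype X] [DecidableEq X]

lemma sum_range_eq_triple (f : ℕ → X → ℂ) (D s : ℕ) (hs1 : 1 ≤ s) (hsD : s + 1 ≤ D)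
    (hzero : ∀ r, r ≤ D → r ∉ ({s - 1, s, s + 1} : Finset ℕ) → f r = 0) :
    ∑ r ∈ Finset.range (D + 1), f r = f (s - 1) + f s + f (s + 1) := by
  have hsub : ({s - 1, s, s + 1} : Finset ℕ) ⊆ Finset.range (D + 1) := by
    intro a ha
    simp only [Finset.mem_insert, Finset.mem_singleton] at ha
    simp only [Finset.mem_range]
    omega
  rw [← Finset.sum_subset hsub (fun r hr hns => hzero r (by simpa [Nat.lt_succ_iff] using hr) hns)]
  rw [Finset.sum_insert (by simp only [Finset.mem_insert, Finset.mem_singleton]; omega),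
    Finset.sum_insert (by simp only [Finset.mem_singleton]; omega),
    Finset.sum_singleton, add_assoc]

variable (G : SimpleGraph X) (D : ℕ) (p : ℕ → ℕ → ℕ → ℕ)
variable (hc : G.Connected) (hdiam : ∀ y z : X, G.dist y z ≤ D)
variable (hex : ∃ y z : X, G.dist y z = D)
variable (hax : ∀ h i j : ℕ, h ≤ D → i ≤ D → j ≤ D → ∀ y z : X, G.dist y z = h →
      (Finset.univ.filter fun w => G.dist y w = i ∧ G.dist w z = j).card = p h i j)

include hdiam hax in
lemma A_mulVec_distMat (v : X → ℂ) (t : ℕ) (ht : t ≤ D) (hD1 : 1 ≤ D) :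
    (distMat G 1).mulVec ((distMat G (t : ℤ)).mulVec v)
      = ∑ h ∈ Finset.range (D + 1), (p h 1 t : ℂ) • (distMat G (h : ℤ)).mulVec v :=
  calc (distMat G 1).mulVec ((distMat G (t : ℤ)).mulVec v)
      = actOn v (distMat G 1 * distMat G (t : ℤ)) := by
        rw [Matrix.mulVec_mulVec]; rfl
    _ = actOn v (∑ h ∈ Finset.range (D + 1), (p h 1 t : ℂ) • distMat G (h : ℤ)) := by
        rw [A_mul_distMat G D p hdiam hax t ht hD1]
    _ = ∑ h ∈ Finset.range (D + 1), (p h 1 t : ℂ) • (distMat G (h : ℤ)).mulVec v := by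
        rw [map_sum]
        exact Finset.sum_congr rfl fun h _ => by rw [_root_.map_smul]; rfl

include hc hdiam hex hax in
lemma recursion (v : X → ℂ) (t : ℕ) (ht1 : 1 ≤ t) (ht : t + 1 ≤ D) :
    (distMat G 1).mulVec ((distMat G (t : ℤ)).mulVec v)
      = (p (t - 1) 1 t : ℂ) • (distMat G ((t - 1 : ℕ) : ℤ)).mulVec v
        + (p t 1 t : ℂ) • (distMat G (t : ℤ)).mulVec v
        + (p (t + 1) 1 t : ℂ) • (distMat G ((t + 1 : ℕ) : ℤ)).mulVec v := by
  rw [A_mulVec_distMat G D p hdiam hax v t (by omega) (by omega)]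
  exact sum_range_eq_triple _ D t ht1 ht (fun r hr hns => by
    have : p r 1 t = 0 := by
      apply p_far_zero G D p hc hex hax r t hr (by omega)
      simp only [Finset.mem_insert, Finset.mem_singleton] at hns
      omega
    rw [this, Nat.cast_zero, zero_smul])

end Rec

end Stmt16Aux
namespace Stmt16Aux
set_option linter.unusedSectionVars false

section Main

variable {X : Type*} [Fintype X] [DecidableEq X]
variable (G : SimpleGraph X) (D : ℕ) (p : ℕ → ℕ → ℕ → ℕ) (x : X) (v : X → ℂ)
variable (hc : G.Connected) (hdiam : ∀ y z : X, G.dist y z ≤ D)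
variable (hex : ∃ y z : X, G.dist y z = D)
variable (hax : ∀ h i j : ℕ, h ≤ D → i ≤ D → j ≤ D → ∀ y z : X, G.dist y z = h →
      (Finset.univ.filter fun w => G.dist y w = i ∧ G.dist w z = j).card = p h i j)
variable (hsupp : ∀ z, (G.dist x z : ℤ) ≠ 1 → v z = 0)
variable (hsum0 : ∑ z, v z = 0)

/-- Abbreviation for the dual idempotents with natural index. -/
def Ee (s : ℕ) : Matrix X X ℂ := dualIdem G x (s : ℤ)

/-- Abbreviation for the vectors `A_t v`. -/
def uu (t : ℕ) : X → ℂ := (distMat G (t : ℤ)).mulVec v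

include hc in
lemma uu_zero : uu G v 0 = v := by
  show (distMat G ((0 : ℕ) : ℤ)).mulVec v = v
  rw [Nat.cast_zero, distMat_zero G hc, Matrix.one_mulVec]

lemma uu_one : uu G v 1 = (distMat G 1).mulVec v := by
  show (distMat G ((1 : ℕ) : ℤ)).mulVec v = _
  rw [Nat.cast_one]

include hsupp in
lemma Ee_one_v : (Ee G x 1).mulVec v = v := by
  funext y
  show (dualIdem G x ((1 : ℕ) : ℤ)).mulVec v y = v y
  rw [dualIdem_mulVec_apply]
  rw [Nat.cast_one]
  split_ifs with h
  · rfl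
  · exact (hsupp y h).symm

include hc hsupp in
lemma hS2 (s t : ℕ) (hst : s + 2 ≤ t ∨ t + 2 ≤ s) :
    (Ee G x s).mulVec (uu G v t) = 0 := by
  apply EA_vanish
  intro y z hy hz
  by_cases h1 : (G.dist x z : ℤ) = 1
  · exfalso
    have hy' : G.dist x y = s := by exact_mod_cast hy
    have hz' : G.dist y z = t := by exact_mod_cast hz
    have h1' : G.dist x z = 1 := by exact_mod_cast h1
    have t1 := hc.dist_triangle (u := x) (v := z) (w := y)
    have t2 := hc.dist_triangle (u := y) (v := x) (w := z)
    rw [SimpleGraph.dist_comm (u := z) (v := y)] at t1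
    rw [SimpleGraph.dist_comm (u := y) (v := x)] at t2
    omega
  · exact hsupp z h1

include hc in
lemma htridiag (s t : ℕ) (w : X → ℂ) (hst : s + 2 ≤ t ∨ t + 2 ≤ s) :
    (Ee G x s).mulVec ((distMat G 1).mulVec ((Ee G x t).mulVec w)) = 0 := by
  apply EAE_vanish
  intro y z hy hz h1
  have hy' : G.dist x y = s := by exact_mod_cast hy
  have hz' : G.dist x z = t := by exact_mod_cast hz
  have h1' : G.dist y z = 1 := by exact_mod_cast h1
  have t1 := hc.dist_triangle (u := x) (v := y) (w := z)
  have t2 := hc.dist_triangle (u := x) (v := z) (w := y)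
  rw [SimpleGraph.dist_comm (u := z) (v := y)] at t2
  omega

include hdiam in
lemma hpart (w : X → ℂ) :
    ∑ s ∈ Finset.range (D + 1), (Ee G x s).mulVec w = w :=
  partition_mulVec G x D (fun z => hdiam x z) w

include hc hdiam hsupp hsum0 in
lemma hdag (i : ℕ) (hi1 : 1 ≤ i) (hiD : i + 1 ≤ D) :
    (Ee G x i).mulVec (uu G v (i - 1)) + (Ee G x i).mulVec (uu G v i)
      + (Ee G x i).mulVec (uu G v (i + 1)) = 0 := by
  have hJ := Jsum_mulVec G D hdiam v hsum0
  have e0 : (Ee G x i).mulVec (∑ j ∈ Finset.range (D + 1), (distMat G (j : ℤ)).mulVec v)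
      = ∑ j ∈ Finset.range (D + 1), (Ee G x i).mulVec ((distMat G (j : ℤ)).mulVec v) :=
    map_sum (Ee G x i).mulVecLin _ _
  have h2 : ∑ j ∈ Finset.range (D + 1), (Ee G x i).mulVec (uu G v j) = 0 := by
    show ∑ j ∈ Finset.range (D + 1), (Ee G x i).mulVec ((distMat G (j : ℤ)).mulVec v) = 0
    rw [← e0, hJ, Matrix.mulVec_zero]
  rw [← h2]
  exact (sum_range_eq_triple (fun j => (Ee G x i).mulVec (uu G v j)) D i hi1 hiD
    (fun r hr hns => by
      show (Ee G x i).mulVec (uu G v r) = 0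
      simp only [Finset.mem_insert, Finset.mem_singleton] at hns
      exact hS2 G x v hc hsupp i r (by omega))).symm

include hdiam in
lemma hsplitGen (s : ℕ) (w : X → ℂ) :
    (Ee G x s).mulVec ((distMat G 1).mulVec w)
      = ∑ r ∈ Finset.range (D + 1),
          (Ee G x s).mulVec ((distMat G 1).mulVec ((Ee G x r).mulVec w)) := by
  conv_lhs => rw [← hpart G D x hdiam w]
  have e1 : (distMat G 1).mulVec (∑ r ∈ Finset.range (D + 1), (Ee G x r).mulVec w)
      = ∑ r ∈ Finset.range (D + 1), (distMat G 1).mulVec ((Ee G x r).mulVec w) :=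
    map_sum (distMat G 1).mulVecLin _ _
  have e2 : (Ee G x s).mulVec
        (∑ r ∈ Finset.range (D + 1), (distMat G 1).mulVec ((Ee G x r).mulVec w))
      = ∑ r ∈ Finset.range (D + 1),
          (Ee G x s).mulVec ((distMat G 1).mulVec ((Ee G x r).mulVec w)) :=
    map_sum (Ee G x s).mulVecLin _ _
  rw [e1, e2]

include hc hdiam in
lemma hsplit (s t : ℕ) (hs1 : 1 ≤ s) (hsD : s + 1 ≤ D) (w : X → ℂ) :
    (Ee G x s).mulVec ((distMat G 1).mulVec w)
      = (Ee G x s).mulVec ((distMat G 1).mulVec ((Ee G x (s - 1)).mulVec w))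
        + (Ee G x s).mulVec ((distMat G 1).mulVec ((Ee G x s).mulVec w))
        + (Ee G x s).mulVec ((distMat G 1).mulVec ((Ee G x (s + 1)).mulVec w)) := by
  rw [hsplitGen G D x hdiam s w]
  exact sum_range_eq_triple _ D s hs1 hsD (fun r hr hns => by
    apply htridiag G x hc
    simp only [Finset.mem_insert, Finset.mem_singleton] at hns
    omega)

include hc hex hax in
lemma hVAL' (t : ℕ) (ht : t + 1 ≤ D) :
    p t 1 (t - 1) + p t 1 t + p t 1 (t + 1) = p 0 1 1 := by
  rcases Nat.eq_zero_or_pos t with rfl | ht1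
  · have h0 := p_zero_one_zero G D p hc hax (by omega)
    have e : (0 : ℕ) - 1 = 0 := rfl
    rw [e, h0]
    simp
  · exact p_val G D p hc hex hax t ht1 ht

include hc hdiam hex hax in
lemma recE (t : ℕ) (ht1 : 1 ≤ t) (ht : t + 1 ≤ D) :
    (distMat G 1).mulVec (uu G v t)
      = (p (t - 1) 1 t : ℂ) • uu G v (t - 1) + (p t 1 t : ℂ) • uu G v t
        + (p (t + 1) 1 t : ℂ) • uu G v (t + 1) :=
  recursion G D p hc hdiam hex hax v t ht1 ht

end Main

end Stmt16Aux
namespace Stmt16Aux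
set_option linter.unusedSectionVars false

section Step

variable {X : Type*} [Fintype X] [DecidableEq X]
variable (G : SimpleGraph X) (D : ℕ) (p : ℕ → ℕ → ℕ → ℕ) (x : X) (v : X → ℂ)
variable (hc : G.Connected) (hdiam : ∀ y z : X, G.dist y z ≤ D)
variable (hex : ∃ y z : X, G.dist y z = D)
variable (hax : ∀ h i j : ℕ, h ≤ D → i ≤ D → j ≤ D → ∀ y z : X, G.dist y z = h →
      (Finset.univ.filter fun w => G.dist y w = i ∧ G.dist w z = j).card = p h i j)
variable (hsupp : ∀ z, (G.dist x z : ℤ) ≠ 1 → v z = 0)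

include hc hdiam hex hax hsupp in
lemma D1lem (t : ℕ) (ht1 : 1 ≤ t) (ht : t + 2 ≤ D)
    (hmt : (Ee G x t).mulVec (uu G v (t - 1)) = -((Ee G x t).mulVec (uu G v t))) :
    (Ee G x (t + 1)).mulVec ((distMat G 1).mulVec ((Ee G x t).mulVec (uu G v t)))
      = -((p t 1 (t - 1) : ℂ) • ((Ee G x (t + 1)).mulVec (uu G v t))) := by
  rcases Nat.lt_or_ge t 2 with h2 | h2
  · -- t = 1
    have ht1' : t = 1 := by omega
    subst ht1'
    simp only [show (1 : ℕ) - 1 = 0 from rfl] at hmt ⊢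
    rw [uu_zero G v hc, Ee_one_v G x v hsupp] at hmt
    have hm1 : (Ee G x 1).mulVec (uu G v 1) = -v := by
      linear_combination (norm := module) hmt
    rw [hm1, Matrix.mulVec_neg, Matrix.mulVec_neg]
    rw [show (distMat G 1).mulVec v = uu G v 1 from (uu_one G v).symm]
    rw [p_one_one_zero G D p hc hex hax (by omega), Nat.cast_one, one_smul]
  · -- t ≥ 2
    have e1 : t - 1 + 1 = t := by omega
    have e2 : t - 1 - 1 = t - 2 := by omega
    have hrec := recE G D p v hc hdiam hex hax (t - 1) (by omega) (by omega)
    rw [e1, e2] at hrec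
    have happ := congrArg (Ee G x (t + 1)).mulVec hrec
    rw [Matrix.mulVec_add, Matrix.mulVec_add, Matrix.mulVec_smul, Matrix.mulVec_smul,
      Matrix.mulVec_smul] at happ
    rw [hS2 G x v hc hsupp (t + 1) (t - 2) (by omega),
      hS2 G x v hc hsupp (t + 1) (t - 1) (by omega)] at happ
    rw [hsplit G D x hc hdiam (t + 1) (t + 1) (by omega) (by omega) (uu G v (t - 1))] at happ
    rw [show t + 1 - 1 = t from rfl] at happ
    rw [hmt, Matrix.mulVec_neg, Matrix.mulVec_neg] at happ
    rw [hS2 G x v hc hsupp (t + 1) (t - 1) (by omega),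
      hS2 G x v hc hsupp (t + 2) (t - 1) (by omega)] at happ
    simp only [Matrix.mulVec_zero, smul_zero, add_zero, zero_add] at happ
    linear_combination (norm := module) -happ

include hc hdiam hex hax hsupp in
lemma Mlem (k : ℕ) (hk1 : 1 ≤ k) (hk2 : k + 2 ≤ D)
    (hmk : (Ee G x k).mulVec (uu G v (k - 1)) = -((Ee G x k).mulVec (uu G v k)))
    (hprev : 2 ≤ k →
      (Ee G x (k - 1)).mulVec (uu G v (k - 2)) = -((Ee G x (k - 1)).mulVec (uu G v (k - 1)))) :
    (Ee G x k).mulVec ((distMat G 1).mulVec ((Ee G x k).mulVec (uu G v k)))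
      = ((p (k - 1) 1 (k - 2) : ℂ) + (p (k - 1) 1 (k - 1) : ℂ) - (p k 1 (k - 1) : ℂ))
          • ((Ee G x k).mulVec (uu G v k)) := by
  rcases Nat.lt_or_ge k 2 with h2 | h2
  · -- k = 1
    have hk1' : k = 1 := by omega
    subst hk1'
    simp only [show (1 : ℕ) - 1 = 0 from rfl, show (1 : ℕ) - 2 = 0 from rfl] at hmk ⊢
    rw [uu_zero G v hc, Ee_one_v G x v hsupp] at hmk
    have hm1 : (Ee G x 1).mulVec (uu G v 1) = -v := by
      linear_combination (norm := module) hmk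
    rw [p_zero_one_zero G D p hc hax (by omega),
      p_one_one_zero G D p hc hex hax (by omega)]
    rw [hm1, Matrix.mulVec_neg, Matrix.mulVec_neg,
      show (distMat G 1).mulVec v = uu G v 1 from (uu_one G v).symm, hm1]
    push_cast
    module
  · -- k ≥ 2
    have e1 : k - 1 + 1 = k := by omega
    have e2 : k - 1 - 1 = k - 2 := by omega
    have hD1 := D1lem G D p x v hc hdiam hex hax hsupp (k - 1) (by omega) (by omega)
      (by rw [e2]; exact hprev h2)
    rw [e1, e2] at hD1
    have hrec := recE G D p v hc hdiam hex hax (k - 1) (by omega) (by omega)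
    rw [e1, e2] at hrec
    have happ := congrArg (Ee G x k).mulVec hrec
    rw [Matrix.mulVec_add, Matrix.mulVec_add, Matrix.mulVec_smul, Matrix.mulVec_smul,
      Matrix.mulVec_smul] at happ
    rw [hS2 G x v hc hsupp k (k - 2) (by omega), hmk] at happ
    rw [hsplit G D x hc hdiam k k hk1 (by omega) (uu G v (k - 1))] at happ
    rw [hD1, hmk, Matrix.mulVec_neg, Matrix.mulVec_neg] at happ
    rw [hS2 G x v hc hsupp (k + 1) (k - 1) (by omega)] at happ
    simp only [Matrix.mulVec_zero, smul_zero, add_zero, zero_add] at happ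
    linear_combination (norm := module) -happ

include hc hdiam hex hax hsupp in
lemma Llem (k : ℕ) (hk1 : 1 ≤ k) (hk2 : k + 2 ≤ D)
    (hmk : (Ee G x k).mulVec (uu G v (k - 1)) = -((Ee G x k).mulVec (uu G v k)))
    (hprev : 2 ≤ k →
      (Ee G x (k - 1)).mulVec (uu G v (k - 2)) = -((Ee G x (k - 1)).mulVec (uu G v (k - 1))))
    (hgk : (Ee G x (k - 1)).mulVec (uu G v k) = 0)
    (hgk1 : (Ee G x k).mulVec (uu G v (k + 1)) = 0) :
    (Ee G x k).mulVec ((distMat G 1).mulVec ((Ee G x (k + 1)).mulVec (uu G v k)))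
      = -((p k 1 (k + 1) : ℂ) • ((Ee G x k).mulVec (uu G v k))) := by
  have hM := Mlem G D p x v hc hdiam hex hax hsupp k hk1 hk2 hmk hprev
  have hrec := recE G D p v hc hdiam hex hax k hk1 (by omega)
  have happ := congrArg (Ee G x k).mulVec hrec
  rw [Matrix.mulVec_add, Matrix.mulVec_add, Matrix.mulVec_smul, Matrix.mulVec_smul,
    Matrix.mulVec_smul] at happ
  rw [hmk, hgk1] at happ
  rw [hsplit G D x hc hdiam k k hk1 (by omega) (uu G v k)] at happ
  rw [hgk, hM] at happ
  simp only [Matrix.mulVec_zero, smul_zero, add_zero, zero_add] at happ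
  -- scalar identity
  have hv1 := hVAL' G D p hc hex hax k (by omega)
  have hv2 := hVAL' G D p hc hex hax (k - 1) (by omega)
  rw [show k - 1 - 1 = k - 2 from by omega, show k - 1 + 1 = k from by omega] at hv2
  have hv1' : (p k 1 (k - 1) : ℂ) + (p k 1 k : ℂ) + (p k 1 (k + 1) : ℂ) = (p 0 1 1 : ℂ) := by
    exact_mod_cast hv1
  have hv2' : (p (k - 1) 1 (k - 2) : ℂ) + (p (k - 1) 1 (k - 1) : ℂ) + (p (k - 1) 1 k : ℂ)
      = (p 0 1 1 : ℂ) := by exact_mod_cast hv2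
  linear_combination (norm := module) happ + (hv1' - hv2') • ((Ee G x k).mulVec (uu G v k))

include hc hdiam hex hax hsupp in
lemma D3lem (k : ℕ) (hk1 : 1 ≤ k) (hk2 : k + 2 ≤ D)
    (hgk1 : (Ee G x k).mulVec (uu G v (k + 1)) = 0) :
    (Ee G x k).mulVec ((distMat G 1).mulVec ((Ee G x (k + 1)).mulVec (uu G v (k + 1))))
      = (p k 1 (k + 1) : ℂ) • ((Ee G x k).mulVec (uu G v k)) := by
  have hrec := recE G D p v hc hdiam hex hax (k + 1) (by omega) (by omega)
  rw [show k + 1 - 1 = k from rfl] at hrec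
  have happ := congrArg (Ee G x k).mulVec hrec
  rw [Matrix.mulVec_add, Matrix.mulVec_add, Matrix.mulVec_smul, Matrix.mulVec_smul,
    Matrix.mulVec_smul] at happ
  rw [hgk1, hS2 G x v hc hsupp k (k + 2) (by omega)] at happ
  rw [hsplit G D x hc hdiam k (k + 1) hk1 (by omega) (uu G v (k + 1))] at happ
  rw [hS2 G x v hc hsupp (k - 1) (k + 1) (by omega), hgk1] at happ
  simp only [Matrix.mulVec_zero, smul_zero, add_zero, zero_add] at happ
  linear_combination (norm := module) happ

include hc hdiam hex hax hsupp in
lemma STEPlem (k : ℕ) (hk1 : 1 ≤ k) (hk2 : k + 2 ≤ D)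
    (hmk : (Ee G x k).mulVec (uu G v (k - 1)) = -((Ee G x k).mulVec (uu G v k)))
    (hprev : 2 ≤ k →
      (Ee G x (k - 1)).mulVec (uu G v (k - 2)) = -((Ee G x (k - 1)).mulVec (uu G v (k - 1))))
    (hgk : (Ee G x (k - 1)).mulVec (uu G v k) = 0)
    (hgk1 : (Ee G x k).mulVec (uu G v (k + 1)) = 0) :
    (Ee G x k).mulVec ((distMat G 1).mulVec
      ((Ee G x (k + 1)).mulVec (uu G v k + uu G v (k + 1)))) = 0 := by
  rw [Matrix.mulVec_add, Matrix.mulVec_add, Matrix.mulVec_add]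
  rw [Llem G D p x v hc hdiam hex hax hsupp k hk1 hk2 hmk hprev hgk hgk1,
    D3lem G D p x v hc hdiam hex hax hsupp k hk1 hk2 hgk1]
  exact neg_add_cancel _

end Step

end Stmt16Aux
open Stmt16Aux in
set_option maxHeartbeats 1000000 in
/-- Let `W` be a thin irreducible `T`-module with endpoint 1 and local
eigenvalue `η = -1`, and let `v` be a nonzero vector in `E₁* W`.  Then
`Eᵢ* A_{i+1} v = 0` for `1 ≤ i ≤ D-1`; in particular `A_D v ∈ E_D* V`. -/
theorem stmt16 (G : SimpleGraph X) (D : ℕ) (p : ℕ → ℕ → ℕ → ℕ)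
    (hdrg : IsDRG G D p) (hD : 3 ≤ D) (x : X)
    (W : Submodule ℂ (X → ℂ))
    (hirr : IsIrredTMod G x D W) (hthin : IsThin G x D W)
    (hend : HasEndpointOne G x W)
    (hloc : ∀ w ∈ W.map (dualIdem G x 1).mulVecLin,
      (dualIdem G x 1 * distMat G 1 * dualIdem G x 1).mulVec w = (-1 : ℂ) • w)
    (v : X → ℂ) (hv : v ≠ 0) (hvW : v ∈ W.map (dualIdem G x 1).mulVecLin) :
    (∀ i : ℕ, 1 ≤ i → i ≤ D - 1 →
        (dualIdem G x (i : ℤ)).mulVec ((distMat G ((i : ℤ) + 1)).mulVec v) = 0) ∧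
      (distMat G (D : ℤ)).mulVec v ∈ LinearMap.range (dualIdem G x (D : ℤ)).mulVecLin := by
  obtain ⟨hc, hdiam, hex, hax⟩ := hdrg
  obtain ⟨w0, hw0W, hw0⟩ := hvW
  rw [Matrix.mulVecLin_apply] at hw0
  have hE1eq : Ee G x 1 = dualIdem G x 1 := by
    show dualIdem G x ((1 : ℕ) : ℤ) = dualIdem G x 1
    norm_num
  have hE0eq : Ee G x 0 = dualIdem G x 0 := by
    show dualIdem G x ((0 : ℕ) : ℤ) = dualIdem G x 0
    norm_num
  have hsupp : ∀ z, (G.dist x z : ℤ) ≠ 1 → v z = 0 := by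
    intro z hz
    rw [← hw0, dualIdem_mulVec_apply]
    simp [hz]
  have hvE1 : (Ee G x 1).mulVec v = v := Ee_one_v G x v hsupp
  have hTA : ∀ w ∈ W, (distMat G 1).mulVec w ∈ W :=
    fun w hw => hirr.1 _ (Algebra.subset_adjoin (Set.mem_union_left _ rfl)) w hw
  have hTE : ∀ s : ℕ, s ≤ D → ∀ w ∈ W, (Ee G x s).mulVec w ∈ W :=
    fun s hs w hw => hirr.1 _ (Algebra.subset_adjoin (Set.mem_union_right _ ⟨s, hs, rfl⟩)) w hw
  have hvmem : v ∈ W := by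
    have h := hTE 1 (by omega) w0 hw0W
    rwa [hE1eq, hw0] at h
  have hE0A : (Ee G x 0).mulVec ((distMat G 1).mulVec v) = 0 := by
    have hm : (dualIdem G x 0).mulVecLin ((distMat G 1).mulVec v)
        ∈ W.map (dualIdem G x 0).mulVecLin :=
      Submodule.mem_map_of_mem (hTA v hvmem)
    rw [hend.1, Submodule.mem_bot] at hm
    rw [hE0eq]
    exact hm
  have hsum0 : ∑ z, v z = 0 := by
    have h1 := congrFun hE0A x
    rw [hE0eq, dualIdem_mulVec_apply, distMat_mulVec_apply] at h1
    simp only [SimpleGraph.dist_self, Nat.cast_zero, if_true, Pi.zero_apply] at h1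
    calc ∑ z, v z = ∑ z, (if (G.dist x z : ℤ) = 1 then v z else 0) := by
          apply Finset.sum_congr rfl
          intro z _
          split_ifs with h
          · rfl
          · exact hsupp z h
      _ = 0 := h1
  -- membership of the vectors A_t v in W
  have hmemu : ∀ t : ℕ, t ≤ D → uu G v t ∈ W := by
    intro t
    induction t using Nat.strong_induction_on with
    | _ t IH =>
      match t with
      | 0 => intro _; rw [uu_zero G v hc]; exact hvmem
      | 1 => intro _; rw [uu_one G v]; exact hTA v hvmem
      | (t2 + 2) =>
        intro ht
        have hrec := recE G D p v hc hdiam hex hax (t2 + 1) (by omega) (by omega)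
        rw [show t2 + 1 - 1 = t2 from rfl, show t2 + 1 + 1 = t2 + 2 from rfl] at hrec
        have hc3 : ((p (t2 + 2) 1 (t2 + 1) : ℕ) : ℂ) ≠ 0 := by
          have := p_c_pos G D p hc hex hax (t2 + 1) (by omega)
          exact_mod_cast this.ne'
        have hkey : (p (t2 + 2) 1 (t2 + 1) : ℂ) • uu G v (t2 + 2)
            = (distMat G 1).mulVec (uu G v (t2 + 1))
              - (p t2 1 (t2 + 1) : ℂ) • uu G v t2
              - (p (t2 + 1) 1 (t2 + 1) : ℂ) • uu G v (t2 + 1) := by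
          rw [hrec]
          module
        have hmem2 : ((p (t2 + 2) 1 (t2 + 1) : ℂ) • uu G v (t2 + 2)) ∈ W := by
          rw [hkey]
          exact Submodule.sub_mem _
            (Submodule.sub_mem _ (hTA _ (IH (t2 + 1) (by omega) (by omega)))
              (Submodule.smul_mem _ _ (IH t2 (by omega) (by omega))))
            (Submodule.smul_mem _ _ (IH (t2 + 1) (by omega) (by omega)))
        have h3 := Submodule.smul_mem W ((p (t2 + 2) 1 (t2 + 1) : ℂ))⁻¹ hmem2
        rwa [inv_smul_smul₀ hc3] at h3
  -- the local eigenvalue condition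
  have hAv1 : (Ee G x 1).mulVec (uu G v 1) = -v := by
    have hl := hloc v ⟨w0, hw0W, by rw [Matrix.mulVecLin_apply]; exact hw0⟩
    rw [← Matrix.mulVec_mulVec, ← Matrix.mulVec_mulVec, ← hE1eq, hvE1] at hl
    rw [show (distMat G 1).mulVec v = uu G v 1 from (uu_one G v).symm] at hl
    rw [hl]
    simp
  -- the main induction
  have Hmain : ∀ j : ℕ, 1 ≤ j → j + 1 ≤ D →
      (Ee G x j).mulVec (uu G v (j - 1) + uu G v j) = 0 := by
    intro j
    induction j using Nat.strong_induction_on with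
    | _ j IH =>
      intro hj1 hjD
      match j, hj1 with
      | 1, _ =>
        show (Ee G x 1).mulVec (uu G v 0 + uu G v 1) = 0
        rw [Matrix.mulVec_add, uu_zero G v hc, hvE1, hAv1]
        simp
      | (k + 2), _ =>
        show (Ee G x (k + 1 + 1)).mulVec (uu G v (k + 1) + uu G v (k + 1 + 1)) = 0
        -- gather the induction hypotheses
        have hmk : (Ee G x (k + 1)).mulVec (uu G v k)
            = -((Ee G x (k + 1)).mulVec (uu G v (k + 1))) := by
          have h := IH (k + 1) (by omega) (by omega) (by omega)
          rw [show k + 1 - 1 = k from rfl, Matrix.mulVec_add] at h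
          linear_combination (norm := module) h
        have hprev : 2 ≤ k + 1 → (Ee G x k).mulVec (uu G v (k - 1))
            = -((Ee G x k).mulVec (uu G v k)) := by
          intro h2
          have h := IH k (by omega) (by omega) (by omega)
          rw [Matrix.mulVec_add] at h
          linear_combination (norm := module) h
        have hgk : (Ee G x k).mulVec (uu G v (k + 1)) = 0 := by
          match k with
          | 0 =>
            rw [uu_one G v]
            exact hE0A
          | (k1 + 1) =>
            have hd := hdag G D x v hc hdiam hsupp hsum0 (k1 + 1) (by omega) (by omega)
            have h := IH (k1 + 1) (by omega) (by omega) (by omega)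
            rw [Matrix.mulVec_add] at h
            rw [show k1 + 1 - 1 = k1 from rfl] at hd h
            linear_combination (norm := module) hd - h
        have hgk1 : (Ee G x (k + 1)).mulVec (uu G v (k + 2)) = 0 := by
          have hd := hdag G D x v hc hdiam hsupp hsum0 (k + 1) (by omega) (by omega)
          rw [show k + 1 - 1 = k from rfl, show k + 1 + 1 = k + 2 from rfl] at hd
          linear_combination (norm := module) hd - hmk
        have hSTEP := STEPlem G D p x v hc hdiam hex hax hsupp (k + 1) (by omega) (by omega)
          (by rw [show k + 1 - 1 = k from rfl]; exact hmk)
          (by intro h2; rw [show k + 1 - 1 = k from rfl, show k + 1 - 2 = k - 1 from by omega]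
              exact hprev h2)
          (by rw [show k + 1 - 1 = k from rfl]; exact hgk)
          (by rw [show k + 1 + 1 = k + 2 from rfl]; exact hgk1)
        -- thin/irreducible argument
        by_contra hne
        have hmemS : (Ee G x (k + 1 + 1)).mulVec (uu G v (k + 1) + uu G v (k + 1 + 1))
            ∈ W.map (Ee G x (k + 1 + 1)).mulVecLin :=
          ⟨uu G v (k + 1) + uu G v (k + 1 + 1),
            W.add_mem (hmemu (k + 1) (by omega)) (hmemu (k + 1 + 1) (by omega)), rfl⟩
        have hfin : Module.finrank ℂ (W.map (Ee G x (k + 1 + 1)).mulVecLin) ≤ 1 :=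
          hthin (k + 2) (by omega)
        have hspan : ∀ w ∈ W.map (Ee G x (k + 1 + 1)).mulVecLin,
            ∃ c : ℂ, w = c • (Ee G x (k + 1 + 1)).mulVec (uu G v (k + 1) + uu G v (k + 1 + 1)) := by
          rw [finrank_le_one_iff] at hfin
          obtain ⟨v0, hv0⟩ := hfin
          obtain ⟨c1, hc1⟩ := hv0 ⟨_, hmemS⟩
          have hc1v : c1 • (v0 : X → ℂ)
              = (Ee G x (k + 1 + 1)).mulVec (uu G v (k + 1) + uu G v (k + 1 + 1)) :=
            congrArg Subtype.val hc1
          have hc1ne : c1 ≠ 0 := by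
            rintro rfl
            rw [zero_smul] at hc1v
            exact hne hc1v.symm
          intro w hw
          obtain ⟨c2, hc2⟩ := hv0 ⟨w, hw⟩
          have hc2v : c2 • (v0 : X → ℂ) = w := congrArg Subtype.val hc2
          refine ⟨c2 * c1⁻¹, ?_⟩
          rw [← hc2v, ← hc1v, smul_smul, mul_assoc, inv_mul_cancel₀ hc1ne, mul_one]
        have hkill : ∀ w ∈ W.map (Ee G x (k + 1 + 1)).mulVecLin,
            (Ee G x (k + 1)).mulVec ((distMat G 1).mulVec w) = 0 := by
          intro w hw
          obtain ⟨c, rfl⟩ := hspan w hw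
          rw [Matrix.mulVec_smul, Matrix.mulVec_smul, hSTEP, smul_zero]
        set U : Submodule ℂ (X → ℂ) :=
          W ⊓ ⨅ s ∈ Finset.range (k + 2), LinearMap.ker (dualIdem G x (s : ℤ)).mulVecLin with hUdef
        have hUmem : ∀ w : X → ℂ,
            w ∈ U ↔ w ∈ W ∧ ∀ s : ℕ, s < k + 2 → (Ee G x s).mulVec w = 0 := by
          intro w
          rw [hUdef]
          simp only [Submodule.mem_inf, Submodule.mem_iInf, LinearMap.mem_ker,
            Matrix.mulVecLin_apply, Finset.mem_range]
          rfl
        have hUT : IsTMod G x D U := by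
          intro B hB
          have hB' : B ∈ Algebra.adjoin ℂ
              ({distMat G 1} ∪ {B | ∃ i : ℕ, i ≤ D ∧ B = dualIdem G x (i : ℤ)}) := hB
          clear hB
          induction hB' using Algebra.adjoin_induction with
          | mem B hBmem =>
            intro w hw
            rcases hBmem with hBA | hBE
            · rw [Set.mem_singleton_iff] at hBA
              subst hBA
              rw [hUmem] at hw ⊢
              refine ⟨hTA w hw.1, ?_⟩
              intro s hs
              rw [hsplitGen G D x hdiam s w]
              apply Finset.sum_eq_zero
              intro r hr
              rcases Nat.lt_or_ge r (k + 2) with hrk | hrk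
              · rw [hw.2 r hrk, Matrix.mulVec_zero, Matrix.mulVec_zero]
              · rcases Nat.lt_or_ge (s + 1) r with hsr | hsr
                · exact htridiag G x hc s r w (by omega)
                · have hr' : r = k + 2 := by omega
                  have hs' : s = k + 1 := by omega
                  subst hr'
                  subst hs'
                  exact hkill _ ⟨w, hw.1, rfl⟩
            · obtain ⟨i0, hi0, rfl⟩ := hBE
              rw [hUmem] at hw ⊢
              constructor
              · exact hTE i0 hi0 w hw.1
              · intro s hs
                have hEE := EE_mulVec G x (s : ℤ) (i0 : ℤ) w
                rw [show dualIdem G x (s : ℤ) = Ee G x s from rfl] at hEE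
                rw [hEE]
                split_ifs with hsi
                · have hsi' : s = i0 := by exact_mod_cast hsi
                  subst hsi'
                  exact hw.2 s hs
                · rfl
          | algebraMap r =>
            intro w hw
            rw [Algebra.algebraMap_eq_smul_one, Matrix.smul_mulVec, Matrix.one_mulVec]
            exact U.smul_mem r hw
          | add B C hBmem hCmem ihB ihC =>
            intro w hw
            rw [Matrix.add_mulVec]
            exact U.add_mem (ihB w hw) (ihC w hw)
          | mul B C hBmem hCmem ihB ihC =>
            intro w hw
            rw [← Matrix.mulVec_mulVec]
            exact ihB _ (ihC w hw)
        rcases hirr.2.2 U inf_le_left hUT with hbot | htop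
        · have hmemU : (Ee G x (k + 1 + 1)).mulVec (uu G v (k + 1) + uu G v (k + 1 + 1)) ∈ U := by
            rw [hUmem]
            constructor
            · exact hTE (k + 1 + 1) (by omega) _
                (W.add_mem (hmemu (k + 1) (by omega)) (hmemu (k + 1 + 1) (by omega)))
            · intro s hs
              have hEE := EE_mulVec G x (s : ℤ) ((k + 1 + 1 : ℕ) : ℤ)
                (uu G v (k + 1) + uu G v (k + 1 + 1))
              rw [show dualIdem G x (s : ℤ) = Ee G x s from rfl,
                show dualIdem G x ((k + 1 + 1 : ℕ) : ℤ) = Ee G x (k + 1 + 1) from rfl] at hEE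
              rw [hEE]
              split_ifs with hsi
              · exfalso
                have : s = k + 1 + 1 := by exact_mod_cast hsi
                omega
              · rfl
          rw [hbot, Submodule.mem_bot] at hmemU
          exact hne hmemU
        · have hvU : v ∈ U := htop ▸ hvmem
          rw [hUmem] at hvU
          have h1 : (Ee G x 1).mulVec v = 0 := hvU.2 1 (by omega)
          rw [hvE1] at h1
          exact hv h1
  -- conclusions
  constructor
  · intro i hi1 hiD
    have hcast : ((i : ℤ) + 1) = ((i + 1 : ℕ) : ℤ) := by push_cast; ring
    rw [hcast]
    have hd := hdag G D x v hc hdiam hsupp hsum0 i hi1 (by omega)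
    have hm := Hmain i hi1 (by omega)
    rw [Matrix.mulVec_add] at hm
    have hfinal : (Ee G x i).mulVec (uu G v (i + 1)) = 0 := by
      linear_combination (norm := module) hd - hm
    exact hfinal
  · apply LinearMap.mem_range.mpr
    refine ⟨(distMat G (D : ℤ)).mulVec v, ?_⟩
    rw [Matrix.mulVecLin_apply]
    have hzero : ∀ s ∈ Finset.range (D + 1), s ≠ D → (Ee G x s).mulVec (uu G v D) = 0 := by
      intro s hs hsD
      rcases Nat.lt_or_ge s (D - 1) with h | h
      · exact hS2 G x v hc hsupp s D (by omega)
      · have hs' : s = D - 1 := by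
          simp only [Finset.mem_range] at hs
          omega
        subst hs'
        have hd := hdag G D x v hc hdiam hsupp hsum0 (D - 1) (by omega) (by omega)
        have hm := Hmain (D - 1) (by omega) (by omega)
        rw [Matrix.mulVec_add] at hm
        rw [show D - 1 + 1 = D from by omega] at hd
        linear_combination (norm := module) hd - hm
    have hpartD := hpart G D x hdiam (uu G v D)
    rw [Finset.sum_eq_single D hzero
      (fun hmem => absurd (Finset.self_mem_range_succ D) hmem)] at hpartD
    exact hpartD
end
end

section
/- Let η be a complex number with η ≠ −1, and set η̃ = −1 − b_1/(1+η). Writing ρ_h = f_h(η̃)·k_h^{−1} for h = 0, 1, 2, we have ρ_0 − ρ_2 + η(ρ_1 − ρ_2) = 0. -/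
open Matrix Polynomial BigOperators

noncomputable section

variable {X : Type*} [Fintype X] [DecidableEq X]

private lemma drg_step {X : Type*} {G : SimpleGraph X} (hconn : G.Connected)
    {w v : X} {n : ℕ} (h : G.dist w v = n + 1) :
    ∃ w', G.Adj w w' ∧ G.dist w' v = n := by
  obtain ⟨q, hq⟩ := hconn.exists_walk_length_eq_dist w v
  have hnil : ¬ q.Nil := by
    rw [SimpleGraph.Walk.not_nil_iff_lt_length]; omega
  refine ⟨q.getVert 1, SimpleGraph.Walk.adj_snd hnil, ?_⟩
  have h1 : G.dist (q.getVert 1) v ≤ q.tail.length := SimpleGraph.dist_le q.tail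
  have h1' : q.tail.length + 1 = q.length := SimpleGraph.Walk.length_tail_add_one hnil
  have h2 : G.dist w v ≤ G.dist w (q.getVert 1) + G.dist (q.getVert 1) v :=
    hconn.dist_triangle
  have h3 : G.dist w (q.getVert 1) = 1 :=
    SimpleGraph.dist_eq_one_iff_adj.mpr (SimpleGraph.Walk.adj_snd hnil)
  omega

private lemma drg_interm {X : Type*} {G : SimpleGraph X} (hconn : G.Connected)
    {u v : X} {n : ℕ} (h : G.dist u v = n) :
    ∀ m, m ≤ n → ∃ w, G.dist u w = m ∧ G.dist w v = n - m := by
  intro m hm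
  induction m with
  | zero => exact ⟨u, by simp, by simpa using h⟩
  | succ m ih =>
    obtain ⟨w, hw1, hw2⟩ := ih (by omega)
    have hsub : G.dist w v = (n - (m+1)) + 1 := by omega
    obtain ⟨w', hadj, hw'⟩ := drg_step hconn hsub
    refine ⟨w', ?_, hw'⟩
    have h1 : G.dist u w' ≤ G.dist u w + G.dist w w' := hconn.dist_triangle
    have h2 : G.dist w w' = 1 := SimpleGraph.dist_eq_one_iff_adj.mpr hadj
    have h3 : G.dist u v ≤ G.dist u w' + G.dist w' v := hconn.dist_triangle
    omega

private lemma alg_final (η η' a b c2 k k2 e2 : ℂ) (hb : b ≠ 0) (hc2 : c2 ≠ 0)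
    (hk : k ≠ 0) (ht : (1:ℂ) + η ≠ 0) (hkeq : k = 1 + a + b)
    (hdc : k2 * c2 = k * b)
    (he2 : c2 * e2 = η' * η' - a * η' - k) (hη' : η' = -1 - b / (1 + η)) :
    1 - e2 * k2⁻¹ + η * (η' * k⁻¹ - e2 * k2⁻¹) = 0 := by
  have hk2 : k2 ≠ 0 := by
    intro h; rw [h, zero_mul] at hdc; exact (mul_ne_zero hk hb) hdc.symm
  have hη'' : η' * (1 + η) = -(1 + η) - b := by
    rw [hη']; field_simp
  have key : k * b + η * η' * b - (1 + η) * (η' * η' - a * η' - k) = 0 := by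
    linear_combination (a + b + 1 - η') * hη'' + (b + 1 + η) * hkeq
  have hE : c2 * (k * k2 - e2 * k + η * (η' * k2 - e2 * k)) = c2 * 0 := by
    linear_combination k * key + (k + η * η') * hdc - (k + η * k) * he2
  have hE' := mul_left_cancel₀ hc2 hE
  apply mul_left_cancel₀ (mul_ne_zero hk hk2)
  have expand : (k * k2) * (1 - e2 * k2⁻¹ + η * (η' * k⁻¹ - e2 * k2⁻¹))
      = k * k2 - e2 * k + η * (η' * k2 - e2 * k) := by
    field_simp
  rw [mul_zero, expand, hE']
/-- Let `η ≠ -1` be complex, `η̃ = -1 - b₁/(1+η)`, and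
`ρ_h = f_h(η̃) k_h⁻¹` for `h = 0, 1, 2`.  Then `ρ₀ - ρ₂ + η(ρ₁ - ρ₂) = 0`.
Here `f₀ = 1` and `λ fⱼ = b_{j-1} f_{j-1} + aⱼ fⱼ + c_{j+1} f_{j+1}`, with
`aⱼ = p j 1 j`, `b_{j-1} = p (j-1) 1 j`, `c_{j+1} = p (j+1) 1 j`, `k_h = p 0 h h`,
and `b₁ = p 1 1 2`. -/
theorem stmt17 (G : SimpleGraph X) (D : ℕ) (p : ℕ → ℕ → ℕ → ℕ)
    (hdrg : IsDRG G D p) (hD : 3 ≤ D)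
    (f : ℕ → Polynomial ℂ) (hf0 : f 0 = 1)
    (hfrec0 : Polynomial.X * f 0 =
      Polynomial.C (p 0 1 0 : ℂ) * f 0 + Polynomial.C (p 1 1 0 : ℂ) * f 1)
    (hfrec : ∀ j : ℕ, 1 ≤ j → j ≤ D - 1 →
      Polynomial.X * f j =
        Polynomial.C (p (j - 1) 1 j : ℂ) * f (j - 1) +
        Polynomial.C (p j 1 j : ℂ) * f j +
        Polynomial.C (p (j + 1) 1 j : ℂ) * f (j + 1))
    (η : ℂ) (hη : η ≠ -1)
    (η' : ℂ) (hη' : η' = -1 - (p 1 1 2 : ℂ) / (1 + η))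
    (ρ : ℕ → ℂ) (hρ : ∀ h : ℕ, ρ h = (f h).eval η' * ((p 0 h h : ℂ))⁻¹) :
    ρ 0 - ρ 2 + η * (ρ 1 - ρ 2) = 0 := by
  obtain ⟨hconn, hDle, ⟨y0, z0, hd0⟩, hp⟩ := hdrg
  have h0D : 0 ≤ D := Nat.zero_le _
  have h1D : 1 ≤ D := by omega
  have h2D : 2 ≤ D := by omega
  obtain ⟨x1, hx1, -⟩ := drg_interm hconn hd0 1 (by omega)
  obtain ⟨x2, hx2, -⟩ := drg_interm hconn hd0 2 (by omega)
  obtain ⟨m1, hm1, hm1'⟩ := drg_interm hconn hx2 1 (by omega)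
  have hm1'' : G.dist m1 x2 = 1 := by omega
  have hself : G.dist y0 y0 = 0 := by simp
  -- p 0 0 0 = 1
  have hp000 : p 0 0 0 = 1 := by
    rw [← hp 0 0 0 h0D h0D h0D y0 y0 hself]
    rw [show (Finset.univ.filter fun w => G.dist y0 w = 0 ∧ G.dist w y0 = 0) = {y0} from ?_]
    · simp
    · ext w
      simp only [Finset.mem_filter, Finset.mem_univ, true_and, Finset.mem_singleton,
        hconn.dist_eq_zero_iff]
      constructor
      · rintro ⟨h, -⟩; exact h.symm
      · rintro rfl; exact ⟨rfl, rfl⟩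
  -- p 0 1 0 = 0
  have hp010 : p 0 1 0 = 0 := by
    rw [← hp 0 1 0 h0D h1D h0D y0 y0 hself, Finset.card_eq_zero]
    ext w
    simp only [Finset.mem_filter, Finset.mem_univ, true_and, Finset.notMem_empty, iff_false,
      not_and]
    intro h1 h2
    rw [hconn.dist_eq_zero_iff] at h2
    subst h2
    simp at h1
  -- p 1 1 0 = 1
  have hp110 : p 1 1 0 = 1 := by
    rw [← hp 1 1 0 h1D h1D h0D y0 x1 hx1]
    rw [show (Finset.univ.filter fun w => G.dist y0 w = 1 ∧ G.dist w x1 = 0) = {x1} from ?_]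
    · simp
    · ext w
      simp only [Finset.mem_filter, Finset.mem_univ, true_and, Finset.mem_singleton,
        hconn.dist_eq_zero_iff]
      constructor
      · rintro ⟨-, h⟩; exact h
      · rintro rfl; exact ⟨hx1, rfl⟩
  -- valency decomposition: k = c1 + a1 + b1
  have hsum : p 0 1 1 = p 1 1 0 + p 1 1 1 + p 1 1 2 := by
    rw [← hp 1 1 0 h1D h1D h0D y0 x1 hx1, ← hp 1 1 1 h1D h1D h1D y0 x1 hx1,
      ← hp 1 1 2 h1D h1D h2D y0 x1 hx1, ← hp 0 1 1 h0D h1D h1D y0 y0 hself]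
    simp only [Finset.card_filter]
    rw [← Finset.sum_add_distrib, ← Finset.sum_add_distrib]
    apply Finset.sum_congr rfl
    intro w _
    have hc : G.dist y0 w = G.dist w y0 := SimpleGraph.dist_comm
    have ht : G.dist w x1 ≤ G.dist w y0 + G.dist y0 x1 := hconn.dist_triangle
    split_ifs <;> omega
  -- double counting: k2 * c2 = k * b1
  have hkey : ∀ z : X,
      (∑ w : X, if G.dist y0 w = 1 ∧ G.dist y0 z = 2 ∧ G.dist w z = 1 then (1:ℕ) else 0)
        = if G.dist y0 z = 2 then p 2 1 1 else 0 := by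
    intro z
    by_cases hz : G.dist y0 z = 2
    · rw [if_pos hz, ← hp 2 1 1 h2D h1D h1D y0 z hz, Finset.card_filter]
      refine Finset.sum_congr rfl fun w _ => ?_
      by_cases h : G.dist y0 w = 1 ∧ G.dist w z = 1
      · rw [if_pos ⟨h.1, hz, h.2⟩, if_pos h]
      · rw [if_neg fun hh => h ⟨hh.1, hh.2.2⟩, if_neg h]
    · rw [if_neg hz]
      exact Finset.sum_eq_zero fun w _ => if_neg fun h => hz h.2.1
  have hkeyw : ∀ w : X,
      (∑ z : X, if G.dist y0 w = 1 ∧ G.dist y0 z = 2 ∧ G.dist w z = 1 then (1:ℕ) else 0)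
        = if G.dist y0 w = 1 then p 1 1 2 else 0 := by
    intro w
    by_cases hw : G.dist y0 w = 1
    · rw [if_pos hw]
      have hw' : G.dist w y0 = 1 := by rw [SimpleGraph.dist_comm]; exact hw
      rw [← hp 1 1 2 h1D h1D h2D w y0 hw', Finset.card_filter]
      apply Finset.sum_congr rfl
      intro z _
      have hcz : G.dist y0 z = G.dist z y0 := SimpleGraph.dist_comm
      by_cases h1 : G.dist w z = 1 ∧ G.dist z y0 = 2
      · rw [if_pos h1, if_pos ⟨hw, by omega, h1.1⟩]
      · rw [if_neg h1, if_neg ?_]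
        rintro ⟨-, h2, h3⟩
        exact h1 ⟨h3, by omega⟩
    · rw [if_neg hw]
      exact Finset.sum_eq_zero fun z _ => if_neg fun h => hw h.1
  have hc2card : (Finset.univ.filter fun z : X => G.dist y0 z = 2).card = p 0 2 2 := by
    rw [← hp 0 2 2 h0D h2D h2D y0 y0 hself]
    congr 1
    ext z
    have hcz : G.dist y0 z = G.dist z y0 := SimpleGraph.dist_comm
    simp only [Finset.mem_filter, Finset.mem_univ, true_and]
    constructor
    · intro h; exact ⟨h, by omega⟩
    · rintro ⟨h, -⟩; exact h
  have hk1card : (Finset.univ.filter fun w : X => G.dist y0 w = 1).card = p 0 1 1 := by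
    rw [← hp 0 1 1 h0D h1D h1D y0 y0 hself]
    congr 1
    ext w
    have hcw : G.dist y0 w = G.dist w y0 := SimpleGraph.dist_comm
    simp only [Finset.mem_filter, Finset.mem_univ, true_and]
    constructor
    · intro h; exact ⟨h, by omega⟩
    · rintro ⟨h, -⟩; exact h
  have hdc : p 0 2 2 * p 2 1 1 = p 0 1 1 * p 1 1 2 := by
    have hN1 : (∑ z : X, ∑ w : X,
        if G.dist y0 w = 1 ∧ G.dist y0 z = 2 ∧ G.dist w z = 1 then (1:ℕ) else 0)
          = p 0 2 2 * p 2 1 1 := by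
      rw [Finset.sum_congr rfl fun z _ => hkey z, ← Finset.sum_filter,
        Finset.sum_const, smul_eq_mul, hc2card]
    have hN2 : (∑ w : X, ∑ z : X,
        if G.dist y0 w = 1 ∧ G.dist y0 z = 2 ∧ G.dist w z = 1 then (1:ℕ) else 0)
          = p 0 1 1 * p 1 1 2 := by
      rw [Finset.sum_congr rfl fun w _ => hkeyw w, ← Finset.sum_filter,
        Finset.sum_const, smul_eq_mul, hk1card]
    rw [← hN1, ← hN2]
    exact Finset.sum_comm
  -- positivity
  have hkpos : 0 < p 0 1 1 := by
    rw [← hp 0 1 1 h0D h1D h1D y0 y0 hself]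
    refine Finset.card_pos.mpr ⟨x1, Finset.mem_filter.mpr ⟨Finset.mem_univ _, hx1, ?_⟩⟩
    rw [SimpleGraph.dist_comm]; exact hx1
  have hk2pos : 0 < p 0 2 2 := by
    rw [← hp 0 2 2 h0D h2D h2D y0 y0 hself]
    refine Finset.card_pos.mpr ⟨x2, Finset.mem_filter.mpr ⟨Finset.mem_univ _, hx2, ?_⟩⟩
    rw [SimpleGraph.dist_comm]; exact hx2
  have hc2pos : 0 < p 2 1 1 := by
    rw [← hp 2 1 1 h2D h1D h1D y0 x2 hx2]
    exact Finset.card_pos.mpr ⟨m1, Finset.mem_filter.mpr ⟨Finset.mem_univ _, hm1, hm1''⟩⟩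
  have hbpos : 0 < p 1 1 2 := by
    have hm1y : G.dist m1 y0 = 1 := by rw [SimpleGraph.dist_comm]; exact hm1
    rw [← hp 1 1 2 h1D h1D h2D m1 y0 hm1y]
    refine Finset.card_pos.mpr ⟨x2, Finset.mem_filter.mpr ⟨Finset.mem_univ _, hm1'', ?_⟩⟩
    rw [SimpleGraph.dist_comm]; exact hx2
  -- cast facts
  have hKne : ((p 0 1 1 : ℕ) : ℂ) ≠ 0 := Nat.cast_ne_zero.mpr (by omega)
  have hK2ne : ((p 0 2 2 : ℕ) : ℂ) ≠ 0 := Nat.cast_ne_zero.mpr (by omega)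
  have hC2ne : ((p 2 1 1 : ℕ) : ℂ) ≠ 0 := Nat.cast_ne_zero.mpr (by omega)
  have hBne : ((p 1 1 2 : ℕ) : ℂ) ≠ 0 := Nat.cast_ne_zero.mpr (by omega)
  have htne : (1 : ℂ) + η ≠ 0 := by
    intro h
    exact hη (by linear_combination h)
  have hkC : ((p 0 1 1 : ℕ) : ℂ) = 1 + (p 1 1 1 : ℂ) + (p 1 1 2 : ℂ) := by
    rw [hsum, hp110]; push_cast; ring
  have hdcC : ((p 0 2 2 : ℕ) : ℂ) * (p 2 1 1 : ℂ) = (p 0 1 1 : ℂ) * (p 1 1 2 : ℂ) := by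
    exact_mod_cast congrArg (Nat.cast : ℕ → ℂ) hdc
  -- polynomials
  have hf1 : f 1 = Polynomial.X := by
    have h := hfrec0
    rw [hf0, hp010, hp110] at h
    simpa using h.symm
  have hfrec1 := hfrec 1 le_rfl (by omega)
  rw [hf0, hf1] at hfrec1
  norm_num at hfrec1
  have heval := congrArg (Polynomial.eval η') hfrec1
  simp only [Polynomial.eval_mul, Polynomial.eval_X, Polynomial.eval_add, Polynomial.eval_C,
    Polynomial.eval_one, Polynomial.eval_natCast, mul_one] at heval
  -- heval : η' * η' = ↑(p 0 1 1) + ↑(p 1 1 1) * η' + ↑(p 2 1 1) * (f 2).eval η'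
  have he2 : ((p 2 1 1 : ℕ) : ℂ) * (f 2).eval η'
      = η' * η' - (p 1 1 1 : ℂ) * η' - (p 0 1 1 : ℂ) := by
    linear_combination -heval
  rw [hρ 0, hρ 1, hρ 2, hf0, hf1, hp000]
  simp only [Polynomial.eval_one, Polynomial.eval_X, Nat.cast_one, inv_one, mul_one]
  exact alg_final η η' _ _ _ _ _ _ hBne hC2ne hKne htne hkC hdcC he2 hη'
end
end
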